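/- arXiv:1404.3086 — 5 statements merged into one kernel-verified Lean document; each statement's English description precedes it below -/
import Mathlib

section
/- Let g be a probability density on ℝ with finite second moment, g ∈ L¹(ℝ) ∩ C⁰(ℝ) and zero mean, and let f be the probability density whose Fourier transform is f̂(ξ) = ∏_{j=0}^{∞} ĝ(ξ/2^j)^{2^j}. Then the second moment of f equals twice the second moment of g: ∫_ℝ x² f(x) dx = 2∫_ℝ x² g(x) dx. -/
open MeasureTheory Real

/-- Fourier transform `ĥ(ξ) = ∫ h(x) e^{-iξx} dx`. -/
noncomputable def ft (h : ℝ → ℝ) (ξ : ℝ) : ℂ :=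
  ∫ x : ℝ, (h x : ℂ) * Complex.exp (-(Complex.I * ξ * x))

open Filter Topology Finset

namespace Stmt3Aux


lemma prod_sub_one_le (a : ℕ → ℂ) (h1 : ∀ j, ‖a j‖ ≤ 1) (s : Finset ℕ) :
    ‖(∏ j ∈ s, a j) - 1‖ ≤ ∑ j ∈ s, ‖a j - 1‖ := by
  induction s using Finset.cons_induction with
  | empty => simp
  | cons k s hk ih =>
    rw [Finset.prod_cons, Finset.sum_cons]
    have : a k * (∏ j ∈ s, a j) - 1 = a k * ((∏ j ∈ s, a j) - 1) + (a k - 1) := by ring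
    rw [this]
    calc ‖a k * ((∏ j ∈ s, a j) - 1) + (a k - 1)‖
        ≤ ‖a k * ((∏ j ∈ s, a j) - 1)‖ + ‖a k - 1‖ := norm_add_le _ _
      _ ≤ 1 * ‖(∏ j ∈ s, a j) - 1‖ + ‖a k - 1‖ := by
          rw [norm_mul]
          gcongr
          exact h1 k
      _ ≤ ‖a k - 1‖ + ∑ j ∈ s, ‖a j - 1‖ := by rw [one_mul]; linarith
  
lemma norm_prod_le_one (a : ℕ → ℂ) (h1 : ∀ j, ‖a j‖ ≤ 1) (s : Finset ℕ) :
    ‖∏ j ∈ s, a j‖ ≤ 1 := by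
  rw [norm_prod]
  exact Finset.prod_le_one (fun j _ => norm_nonneg _) (fun j _ => h1 j)

lemma prod_expand_le (a : ℕ → ℂ) (h1 : ∀ j, ‖a j‖ ≤ 1) (s : Finset ℕ) :
    ‖(∏ j ∈ s, a j) - 1 - ∑ j ∈ s, (a j - 1)‖ ≤ (∑ j ∈ s, ‖a j - 1‖) ^ 2 := by
  induction s using Finset.cons_induction with
  | empty => simp
  | cons k s hk ih =>
    rw [Finset.prod_cons, Finset.sum_cons, Finset.sum_cons]
    have key : a k * (∏ j ∈ s, a j) - 1 - ((a k - 1) + ∑ j ∈ s, (a j - 1))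
        = a k * ((∏ j ∈ s, a j) - 1 - ∑ j ∈ s, (a j - 1))
          + (a k - 1) * (∑ j ∈ s, (a j - 1)) := by ring
    rw [key]
    have hS : ‖∑ j ∈ s, (a j - 1)‖ ≤ ∑ j ∈ s, ‖a j - 1‖ := norm_sum_le _ _
    have hB : (0:ℝ) ≤ ∑ j ∈ s, ‖a j - 1‖ :=
      Finset.sum_nonneg fun j _ => norm_nonneg _
    calc ‖a k * ((∏ j ∈ s, a j) - 1 - ∑ j ∈ s, (a j - 1))
          + (a k - 1) * (∑ j ∈ s, (a j - 1))‖
        ≤ ‖a k‖ * ‖(∏ j ∈ s, a j) - 1 - ∑ j ∈ s, (a j - 1)‖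
          + ‖a k - 1‖ * ‖∑ j ∈ s, (a j - 1)‖ := by
          refine (norm_add_le _ _).trans ?_
          rw [norm_mul, norm_mul]
      _ ≤ 1 * (∑ j ∈ s, ‖a j - 1‖) ^ 2 + ‖a k - 1‖ * (∑ j ∈ s, ‖a j - 1‖) := by
          gcongr
          · exact h1 k
      _ ≤ (‖a k - 1‖ + ∑ j ∈ s, ‖a j - 1‖) ^ 2 := by nlinarith [norm_nonneg (a k - 1)]

lemma multipliable_aux (a : ℕ → ℂ) (h1 : ∀ j, ‖a j‖ ≤ 1)
    (h : Summable fun j => ‖a j - 1‖) : Multipliable a := by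
  have hc : CauchySeq (fun s : Finset ℕ => ∏ j ∈ s, a j) := by
    rw [Metric.cauchySeq_iff']
    intro ε hε
    obtain ⟨s, hs⟩ := summable_iff_vanishing.mp h (Metric.ball 0 ε) (Metric.ball_mem_nhds 0 hε)
    refine ⟨s, fun n hn => ?_⟩
    have hsub : s ⊆ n := hn
    have hsplit : (∏ j ∈ n \ s, a j) * ∏ j ∈ s, a j = ∏ j ∈ n, a j :=
      Finset.prod_sdiff hsub
    rw [dist_eq_norm, ← hsplit]
    have : (∏ j ∈ n \ s, a j) * (∏ j ∈ s, a j) - (∏ j ∈ s, a j)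
        = ((∏ j ∈ n \ s, a j) - 1) * ∏ j ∈ s, a j := by ring
    rw [this, norm_mul]
    have h2 := hs (n \ s) (Finset.sdiff_disjoint)
    simp only [Metric.mem_ball, dist_zero_right, Real.norm_eq_abs] at h2
    have h3 : ∑ j ∈ n \ s, ‖a j - 1‖ < ε := by
      calc ∑ j ∈ n \ s, ‖a j - 1‖
          = |∑ j ∈ n \ s, ‖a j - 1‖| :=
            (abs_of_nonneg (Finset.sum_nonneg fun j _ => norm_nonneg _)).symm
        _ < ε := h2
    calc ‖(∏ j ∈ n \ s, a j) - 1‖ * ‖∏ j ∈ s, a j‖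
        ≤ (∑ j ∈ n \ s, ‖a j - 1‖) * 1 := by
          gcongr
          · exact prod_sub_one_le a h1 _
          · exact norm_prod_le_one a h1 _
      _ < ε := by rwa [mul_one]
  obtain ⟨L, hL⟩ := cauchySeq_tendsto_of_complete hc
  exact ⟨L, hL⟩

lemma tprod_expand (a : ℕ → ℂ) (h1 : ∀ j, ‖a j‖ ≤ 1)
    (h : Summable fun j => ‖a j - 1‖) :
    ‖(∏' j, a j) - 1 - ∑' j, (a j - 1)‖ ≤ (∑' j, ‖a j - 1‖) ^ 2 := by
  have hm := multipliable_aux a h1 h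
  have hsum : Summable fun j => a j - 1 := h.of_norm
  have hlim1 : Tendsto (fun s : Finset ℕ => ‖(∏ j ∈ s, a j) - 1 - ∑ j ∈ s, (a j - 1)‖)
      atTop (𝓝 ‖(∏' j, a j) - 1 - ∑' j, (a j - 1)‖) := by
    exact ((hm.hasProd.sub tendsto_const_nhds).sub hsum.hasSum).norm
  have hlim2 : Tendsto (fun s : Finset ℕ => (∑ j ∈ s, ‖a j - 1‖) ^ 2)
      atTop (𝓝 ((∑' j, ‖a j - 1‖) ^ 2)) := h.hasSum.pow 2
  exact le_of_tendsto_of_tendsto' hlim1 hlim2 (fun s => prod_expand_le a h1 s)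



lemma norm_cexp_eq_one (ξ x : ℝ) : ‖Complex.exp (-(Complex.I * ξ * x))‖ = 1 := by
  rw [Complex.norm_exp]
  have : (-(Complex.I * ξ * x)).re = 0 := by simp
  rw [this, Real.exp_zero]

lemma integrable_mul_cexp {h : ℝ → ℝ} (hi : Integrable h) (ξ : ℝ) :
    Integrable fun x => (h x : ℂ) * Complex.exp (-(Complex.I * ξ * x)) := by
  have hc : Continuous fun x : ℝ => Complex.exp (-(Complex.I * ξ * x)) := by
    fun_prop
  have := (hi.ofReal (𝕜 := ℂ)).bdd_mul hc.aestronglyMeasurable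
    (Eventually.of_forall fun x => le_of_eq (norm_cexp_eq_one ξ x))
  exact this.congr (Eventually.of_forall fun x => mul_comm _ _)

lemma norm_ft_le_one {h : ℝ → ℝ} (h0 : ∀ x, 0 ≤ h x) (hmass : ∫ x : ℝ, h x = 1)
    (ξ : ℝ) : ‖ft h ξ‖ ≤ 1 := by
  refine (norm_integral_le_integral_norm _).trans ?_
  have : ∀ x : ℝ, ‖(h x : ℂ) * Complex.exp (-(Complex.I * ξ * x))‖ = h x := by
    intro x
    rw [norm_mul, norm_cexp_eq_one, mul_one, Complex.norm_real,
      Real.norm_eq_abs, abs_of_nonneg (h0 x)]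
  rw [show (fun x : ℝ => ‖(h x : ℂ) * Complex.exp (-(Complex.I * ξ * x))‖) = h from
    funext this]
  rw [hmass]

lemma integrable_mul_cos {h : ℝ → ℝ} (hi : Integrable h) (ξ : ℝ) :
    Integrable fun x => h x * Real.cos (ξ * x) := by
  have hc : Continuous fun x : ℝ => Real.cos (ξ * x) := by fun_prop
  have := hi.bdd_mul hc.aestronglyMeasurable
    (Eventually.of_forall fun x => by rw [Real.norm_eq_abs]; exact Real.abs_cos_le_one _)
  exact this.congr (Eventually.of_forall fun x => mul_comm _ _)

lemma re_ft {h : ℝ → ℝ} (hi : Integrable h) (ξ : ℝ) :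
    (ft h ξ).re = ∫ x : ℝ, h x * Real.cos (ξ * x) := by
  have := integral_re (𝕜 := ℂ) (integrable_mul_cexp hi ξ)
  rw [RCLike.re_eq_complex_re] at this
  rw [ft, ← this]
  congr 1
  funext x
  have he : -(Complex.I * ξ * x) = ((-(ξ * x) : ℝ) : ℂ) * Complex.I := by
    push_cast; ring
  rw [he]
  have : (Complex.exp (((-(ξ * x) : ℝ) : ℂ) * Complex.I)).re = Real.cos (-(ξ * x)) :=
    Complex.exp_ofReal_mul_I_re _
  have hre : ∀ (r : ℝ) (z : ℂ), ((r : ℂ) * z).re = r * z.re := by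
    intro r z; simp [Complex.mul_re]
  rw [hre, this, Real.cos_neg]

lemma one_sub_re_ft {h : ℝ → ℝ} (hi : Integrable h) (hmass : ∫ x : ℝ, h x = 1) (ξ : ℝ) :
    1 - (ft h ξ).re = ∫ x : ℝ, h x * (1 - Real.cos (ξ * x)) := by
  rw [re_ft hi ξ]
  have : ∀ x : ℝ, h x * (1 - Real.cos (ξ * x)) = h x - h x * Real.cos (ξ * x) := by
    intro x; ring
  rw [show (fun x : ℝ => h x * (1 - Real.cos (ξ * x)))
      = fun x => h x - h x * Real.cos (ξ * x) from funext this]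
  rw [integral_sub hi (integrable_mul_cos hi ξ), hmass]

lemma one_sub_re_ft_nonneg {h : ℝ → ℝ} (h0 : ∀ x, 0 ≤ h x) (hi : Integrable h)
    (hmass : ∫ x : ℝ, h x = 1) (ξ : ℝ) : 0 ≤ 1 - (ft h ξ).re := by
  rw [one_sub_re_ft hi hmass ξ]
  refine integral_nonneg fun x => ?_
  have h1 := Real.cos_le_one (ξ * x)
  have h2 := h0 x
  have : (0:ℝ) ≤ 1 - Real.cos (ξ * x) := by linarith
  positivity

lemma one_sub_re_ft_le {h : ℝ → ℝ} (h0 : ∀ x, 0 ≤ h x) (hi : Integrable h)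
    (hmass : ∫ x : ℝ, h x = 1) (hm2 : Integrable fun x => x ^ 2 * h x) (ξ : ℝ) :
    1 - (ft h ξ).re ≤ ξ ^ 2 / 2 * ∫ x : ℝ, x ^ 2 * h x := by
  rw [one_sub_re_ft hi hmass ξ]
  have : ξ ^ 2 / 2 * ∫ x : ℝ, x ^ 2 * h x = ∫ x : ℝ, ξ ^ 2 / 2 * (x ^ 2 * h x) := by
    rw [integral_const_mul]
  rw [this]
  refine integral_mono ((hi.sub (integrable_mul_cos hi ξ)).congr
    (Eventually.of_forall fun x => by simp; ring)) (hm2.const_mul _) fun x => ?_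
  have h1 : 1 - Real.cos (ξ * x) ≤ (ξ * x) ^ 2 / 2 := by
    have := Real.one_sub_sq_div_two_le_cos (x := ξ * x)
    linarith
  have := h0 x
  nlinarith



/-- pointwise bound `‖e^{-it} - 1 + it‖ ≤ 3 t^2`. -/
lemma cexp_taylor_bound (t : ℝ) :
    ‖Complex.exp (-(Complex.I * t)) - 1 + Complex.I * t‖ ≤ 3 * t ^ 2 := by
  have hz : ‖-(Complex.I * t)‖ = |t| := by
    simp [map_mul]
  have hrw : Complex.exp (-(Complex.I * t)) - 1 + Complex.I * t
      = Complex.exp (-(Complex.I * t)) - 1 - (-(Complex.I * t)) := by ring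
  rw [hrw]
  rcases le_or_gt (|t|) 1 with h | h
  · have := Complex.norm_exp_sub_one_sub_id_le (x := -(Complex.I * t)) (by rw [hz]; exact h)
    rw [hz] at this
    calc ‖Complex.exp (-(Complex.I * t)) - 1 - (-(Complex.I * t))‖
        ≤ |t| ^ 2 := this
      _ = t ^ 2 := sq_abs t
      _ ≤ 3 * t ^ 2 := by nlinarith
  · have h1 : ‖Complex.exp (-(Complex.I * t))‖ = 1 := by
      have : -(Complex.I * (t:ℂ)) = -(Complex.I * (1:ℝ) * t) := by push_cast; ring
      rw [this]
      exact norm_cexp_eq_one 1 t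
    calc ‖Complex.exp (-(Complex.I * t)) - 1 - (-(Complex.I * t))‖
        ≤ ‖Complex.exp (-(Complex.I * t)) - 1‖ + ‖-(Complex.I * t)‖ := norm_sub_le _ _
      _ ≤ (‖Complex.exp (-(Complex.I * t))‖ + ‖(1:ℂ)‖) + |t| := by
          gcongr
          · exact norm_sub_le _ _
          · simpa using le_of_eq hz
      _ = 2 + |t| := by rw [h1]; norm_num
      _ ≤ 3 * t ^ 2 := by nlinarith [sq_abs t, abs_nonneg t]

lemma integrable_id_mul {h : ℝ → ℝ} (h0 : ∀ x, 0 ≤ h x) (hi : Integrable h)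
    (hm2 : Integrable fun x => x ^ 2 * h x) :
    Integrable fun x => x * h x := by
  refine (hi.add hm2).mono ?_ (Eventually.of_forall fun x => ?_)
  · exact (continuous_id.aestronglyMeasurable.mul hi.1)
  · simp only [Real.norm_eq_abs, abs_mul]
    have hx : |x| ≤ 1 + x ^ 2 := by nlinarith [sq_abs x, abs_nonneg x]
    have h1 : |h x| = h x := abs_of_nonneg (h0 x)
    have h2 : |x ^ 2| = x ^ 2 := abs_of_nonneg (sq_nonneg x)
    calc |x| * |h x| ≤ (1 + x ^ 2) * h x := by rw [h1]; exact mul_le_mul_of_nonneg_right hx (h0 x)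
      _ = h x + x ^ 2 * h x := by ring
      _ ≤ |h x + x ^ 2 * h x| := le_abs_self _
  
/-- key quantitative bound using mean zero. -/
lemma key_g_bound {g : ℝ → ℝ} (hg_nonneg : ∀ x, 0 ≤ g x) (hg_int : Integrable g)
    (hg_mass : ∫ x : ℝ, g x = 1)
    (hg_mom2 : Integrable (fun x => x ^ 2 * g x))
    (hg_mean : (∫ x : ℝ, x * g x) = 0) (ξ : ℝ) :
    ‖ft g ξ - 1‖ ≤ 3 * (∫ x : ℝ, x ^ 2 * g x) * ξ ^ 2 := by
  have hxg := integrable_id_mul hg_nonneg hg_int hg_mom2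
  have hint1 := integrable_mul_cexp hg_int ξ
  have hint2 : Integrable fun x : ℝ => (g x : ℂ) := hg_int.ofReal
  have hint3 : Integrable fun x : ℝ => (g x : ℂ) * (Complex.I * (ξ * x)) := by
    have : Integrable fun x : ℝ => ((x * g x : ℝ) : ℂ) := hxg.ofReal
    refine (this.const_mul (Complex.I * ξ)).congr
      (Eventually.of_forall (fun x => ?_))
    push_cast; ring
  have heq : ft g ξ - 1 =
      ∫ x : ℝ, (g x : ℂ) * (Complex.exp (-(Complex.I * (ξ * x))) - 1 + Complex.I * (ξ * x)) := by
    have hsplit : (fun x : ℝ => (g x : ℂ) *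
        (Complex.exp (-(Complex.I * (ξ * x))) - 1 + Complex.I * (ξ * x)))
        = fun x : ℝ => ((g x : ℂ) * Complex.exp (-(Complex.I * ξ * x)) - (g x : ℂ))
          + (g x : ℂ) * (Complex.I * (ξ * x)) := by
      funext x; push_cast; ring_nf
    have hint12 : Integrable fun x : ℝ =>
        (g x : ℂ) * Complex.exp (-(Complex.I * ξ * x)) - (g x : ℂ) := hint1.sub hint2
    rw [hsplit, integral_add hint12 hint3, integral_sub hint1 hint2]
    have hz : ∫ x : ℝ, (g x : ℂ) * (Complex.I * (ξ * x)) = 0 := by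
      have hrw : (fun x : ℝ => (g x : ℂ) * (Complex.I * (ξ * x)))
          = fun x : ℝ => (Complex.I * ξ) * ((x * g x : ℝ) : ℂ) := by
        funext x; push_cast; ring
      have hcast : ∫ a : ℝ, ((a * g a : ℝ) : ℂ) = ((∫ a : ℝ, a * g a : ℝ) : ℂ) :=
        Complex.ofRealCLM.integral_comp_comm hxg
      rw [hrw, integral_const_mul, hcast, hg_mean]
      simp
    have hone : ∫ x : ℝ, (g x : ℂ) = 1 := by
      have hcast : ∫ x : ℝ, ((g x : ℝ) : ℂ) = ((∫ x : ℝ, g x : ℝ) : ℂ) :=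
        Complex.ofRealCLM.integral_comp_comm hg_int
      rw [hcast, hg_mass]; simp
    rw [hz, hone, ft]
    ring
  rw [heq]
  have hbd : ∀ x : ℝ, ‖(g x : ℂ) *
      (Complex.exp (-(Complex.I * (ξ * x))) - 1 + Complex.I * (ξ * x))‖
      ≤ 3 * ξ ^ 2 * (x ^ 2 * g x) := by
    intro x
    rw [norm_mul, Complex.norm_real, Real.norm_eq_abs, abs_of_nonneg (hg_nonneg x)]
    have hb : ‖Complex.exp (-(Complex.I * (ξ * x))) - 1 + Complex.I * (ξ * x)‖
        ≤ 3 * (ξ * x) ^ 2 := by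
      have := cexp_taylor_bound (ξ * x)
      have hcast : (Complex.I * ((ξ * x : ℝ) : ℂ)) = Complex.I * (ξ * x) := by push_cast; ring
      rw [← hcast] at *
      convert this using 3 <;> push_cast <;> ring
    calc g x * ‖Complex.exp (-(Complex.I * (ξ * x))) - 1 + Complex.I * (ξ * x)‖
        ≤ g x * (3 * (ξ * x) ^ 2) := mul_le_mul_of_nonneg_left hb (hg_nonneg x)
      _ = 3 * ξ ^ 2 * (x ^ 2 * g x) := by ring
  calc ‖∫ x : ℝ, (g x : ℂ) *
        (Complex.exp (-(Complex.I * (ξ * x))) - 1 + Complex.I * (ξ * x))‖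
      ≤ ∫ x : ℝ, ‖(g x : ℂ) *
        (Complex.exp (-(Complex.I * (ξ * x))) - 1 + Complex.I * (ξ * x))‖ :=
        norm_integral_le_integral_norm _
    _ ≤ ∫ x : ℝ, 3 * ξ ^ 2 * (x ^ 2 * g x) := by
        refine integral_mono_of_nonneg (Eventually.of_forall fun x => norm_nonneg _)
          (hg_mom2.const_mul _) (Eventually.of_forall hbd)
    _ = 3 * (∫ x : ℝ, x ^ 2 * g x) * ξ ^ 2 := by rw [integral_const_mul]; ring


lemma tendsto_div_scale (c : ℝ) (hc : c ≠ 0) :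
    Filter.Tendsto (fun ξ : ℝ => ξ / c) (𝓝[≠] (0:ℝ)) (𝓝[≠] (0:ℝ)) := by
  apply tendsto_nhdsWithin_of_tendsto_nhds_of_eventually_within
  · have : Filter.Tendsto (fun ξ : ℝ => ξ / c) (𝓝 (0:ℝ)) (𝓝 (0 / c)) :=
      (tendsto_id.div_const c)
    rw [zero_div] at this
    exact this.mono_left nhdsWithin_le_nhds
  · filter_upwards [self_mem_nhdsWithin] with ξ (hξ : ξ ≠ 0)
    exact div_ne_zero hξ hc

lemma tendsto_sin_div : Filter.Tendsto (fun t : ℝ => Real.sin t / t) (𝓝[≠] (0:ℝ)) (𝓝 1) := by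
  have h := (Real.hasDerivAt_sin 0)
  rw [Real.cos_zero, hasDerivAt_iff_tendsto_slope] at h
  refine h.congr' ?_
  filter_upwards [self_mem_nhdsWithin] with t (ht : t ≠ 0)
  simp [slope_def_field, Real.sin_zero]

lemma tendsto_cos_sq (x : ℝ) :
    Filter.Tendsto (fun ξ : ℝ => 2 * (1 - Real.cos (ξ * x)) / ξ ^ 2)
      (𝓝[≠] (0:ℝ)) (𝓝 (x ^ 2)) := by
  rcases eq_or_ne x 0 with rfl | hx
  · simp only [mul_zero, Real.cos_zero, sub_self, zero_div, mul_zero]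
    simpa using tendsto_const_nhds
  · have hcomp : Filter.Tendsto (fun ξ : ℝ => Real.sin (ξ * x / 2) / (ξ * x / 2))
        (𝓝[≠] (0:ℝ)) (𝓝 1) := by
      have hscale : Filter.Tendsto (fun ξ : ℝ => ξ * x / 2) (𝓝[≠] (0:ℝ)) (𝓝[≠] (0:ℝ)) := by
        refine (tendsto_div_scale (2 / x) (div_ne_zero two_ne_zero hx)).congr fun ξ => ?_
        field_simp
      exact tendsto_sin_div.comp hscale
    have hlim : Filter.Tendsto
        (fun ξ : ℝ => x ^ 2 * (Real.sin (ξ * x / 2) / (ξ * x / 2)) ^ 2)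
        (𝓝[≠] (0:ℝ)) (𝓝 (x ^ 2)) := by
      have := ((hcomp.pow 2).const_mul (x ^ 2))
      simpa using this
    refine hlim.congr' ?_
    filter_upwards [self_mem_nhdsWithin] with ξ (hξ : ξ ≠ 0)
    have hcos : Real.cos (ξ * x) = 1 - 2 * Real.sin (ξ * x / 2) ^ 2 := by
      rw [show ξ * x = 2 * (ξ * x / 2) by ring, Real.cos_two_mul', Real.cos_sq']
      ring
    rw [hcos]
    field_simp
    ring

lemma tendsto_mom2 {h : ℝ → ℝ} (h0 : ∀ x, 0 ≤ h x) (hi : Integrable h)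
    (hmass : ∫ x : ℝ, h x = 1) (hm2 : Integrable fun x => x ^ 2 * h x) :
    Filter.Tendsto (fun ξ : ℝ => 2 * (1 - (ft h ξ).re) / ξ ^ 2)
      (𝓝[≠] (0:ℝ)) (𝓝 (∫ x : ℝ, x ^ 2 * h x)) := by
  have key : Filter.Tendsto
      (fun ξ : ℝ => ∫ x : ℝ, 2 * (1 - Real.cos (ξ * x)) / ξ ^ 2 * h x)
      (𝓝[≠] (0:ℝ)) (𝓝 (∫ x : ℝ, x ^ 2 * h x)) := by
    apply tendsto_integral_filter_of_dominated_convergence (fun x => x ^ 2 * h x)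
    · filter_upwards with ξ
      have hc : Continuous fun x : ℝ => 2 * (1 - Real.cos (ξ * x)) / ξ ^ 2 := by fun_prop
      exact (hc.aestronglyMeasurable.mul hi.1)
    · filter_upwards [self_mem_nhdsWithin] with ξ (hξ : ξ ≠ 0)
      refine Eventually.of_forall fun x => ?_
      have h1 : 0 ≤ 1 - Real.cos (ξ * x) := by
        have := Real.cos_le_one (ξ * x); linarith
      have h2 : 1 - Real.cos (ξ * x) ≤ (ξ * x) ^ 2 / 2 := by
        have := Real.one_sub_sq_div_two_le_cos (x := ξ * x); linarith
      have hξ2 : (0:ℝ) < ξ ^ 2 := by positivity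
      rw [Real.norm_eq_abs, abs_mul, abs_div, abs_of_nonneg (by linarith : (0:ℝ) ≤ 2 * (1 - Real.cos (ξ * x))), abs_of_nonneg hξ2.le, abs_of_nonneg (h0 x)]
      have hd : 2 * (1 - Real.cos (ξ * x)) / ξ ^ 2 ≤ x ^ 2 := by
        rw [div_le_iff₀ hξ2]
        nlinarith
      exact mul_le_mul_of_nonneg_right hd (h0 x)
    · exact hm2
    · refine Eventually.of_forall fun x => ?_
      exact (tendsto_cos_sq x).mul_const (h x)
  refine key.congr' ?_
  filter_upwards [self_mem_nhdsWithin] with ξ (hξ : ξ ≠ 0)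
  rw [one_sub_re_ft hi hmass ξ]
  rw [show (fun x : ℝ => 2 * (1 - Real.cos (ξ * x)) / ξ ^ 2 * h x)
      = fun x : ℝ => 2 / ξ ^ 2 * (h x * (1 - Real.cos (ξ * x))) from funext fun x => by ring]
  rw [integral_const_mul]
  ring

lemma pow_sub_one_le {z : ℂ} (hz : ‖z‖ ≤ 1) (n : ℕ) :
    ‖z ^ n - 1‖ ≤ (n : ℝ) * ‖z - 1‖ := by
  have := prod_sub_one_le (fun _ => z) (fun _ => hz) (Finset.range n)
  simpa [Finset.prod_const, Finset.sum_const, Finset.card_range, nsmul_eq_mul] using this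

lemma pow_expand_le {z : ℂ} (hz : ‖z‖ ≤ 1) (n : ℕ) :
    ‖z ^ n - 1 - (n : ℂ) * (z - 1)‖ ≤ ((n : ℝ) * ‖z - 1‖) ^ 2 := by
  have := prod_expand_le (fun _ => z) (fun _ => hz) (Finset.range n)
  simpa [Finset.prod_const, Finset.sum_const, Finset.card_range, nsmul_eq_mul, mul_sub] using this

end Stmt3Aux

open Stmt3Aux in
/-- If `f` is the probability density (in `𝒫₂ ∩ L¹`) whose Fourier transform
is `f̂(ξ) = ∏_{j=0}^∞ ĝ(ξ/2^j)^(2^j)`, then the second moment of `f` is twice that of `g`. -/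
theorem stmt_3 (g : ℝ → ℝ)
    (hg_nonneg : ∀ x, 0 ≤ g x)
    (hg_int : Integrable g)
    (hg_cont : Continuous g)
    (hg_mass : ∫ x : ℝ, g x = 1)
    (hg_mom2 : Integrable (fun x => x ^ 2 * g x))
    (hg_mean : (∫ x : ℝ, x * g x) = 0)
    (f : ℝ → ℝ)
    (hf_nonneg : ∀ x, 0 ≤ f x)
    (hf_int : Integrable f)
    (hf_mass : ∫ x : ℝ, f x = 1)
    (hf_mom2 : Integrable (fun x => x ^ 2 * f x))
    (hft : ∀ ξ : ℝ, ft f ξ = ∏' j : ℕ, (ft g (ξ / 2 ^ j)) ^ (2 ^ j : ℕ)) :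
    (∫ x : ℝ, x ^ 2 * f x) = 2 * ∫ x : ℝ, x ^ 2 * g x := by
  set m2g : ℝ := ∫ x : ℝ, x ^ 2 * g x with hm2g_def
  have hm2g_nonneg : 0 ≤ m2g :=
    integral_nonneg fun x => mul_nonneg (sq_nonneg x) (hg_nonneg x)
  set C : ℝ := 3 * m2g with hC_def
  have hC0 : 0 ≤ C := by positivity
  have hGle1 : ∀ ξ : ℝ, ‖ft g ξ‖ ≤ 1 := norm_ft_le_one hg_nonneg hg_mass
  have hGkey : ∀ ξ : ℝ, ‖ft g ξ - 1‖ ≤ C * ξ ^ 2 := fun ξ => by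
    have h := key_g_bound hg_nonneg hg_int hg_mass hg_mom2 hg_mean ξ
    rw [← hm2g_def] at h
    rw [hC_def]
    exact h
  -- the factors of the infinite product
  set a : ℝ → ℕ → ℂ := fun ξ j => (ft g (ξ / 2 ^ j)) ^ (2 ^ j : ℕ) with ha_def
  have ha1 : ∀ ξ j, ‖a ξ j‖ ≤ 1 := fun ξ j => by
    rw [ha_def, norm_pow]
    exact pow_le_one₀ (norm_nonneg _) (hGle1 _)
  have hpow_pos : ∀ j : ℕ, (0:ℝ) < 2 ^ j := fun j => by positivity
  have hq : ∀ j : ℕ, ((2:ℝ) ^ j) ^ 2 = 4 ^ j := fun j => by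
    rw [← pow_mul, mul_comm, pow_mul]; norm_num
  have hquarterj : ∀ j : ℕ, ((1:ℝ)/4) ^ j = 1 / 4 ^ j := fun j => by
    rw [div_pow, one_pow]
  have hmul24 : ∀ j : ℕ, (2:ℝ) ^ j * ((1:ℝ)/4) ^ j = ((1:ℝ)/2) ^ j := fun j => by
    rw [← mul_pow]; norm_num
  have hdiv24 : ∀ j : ℕ, (2:ℝ) ^ j / 4 ^ j = ((1:ℝ)/2) ^ j := fun j => by
    rw [← div_pow]; norm_num
  have hGj : ∀ ξ : ℝ, ∀ j : ℕ, ‖ft g (ξ / 2 ^ j) - 1‖ ≤ C * ξ ^ 2 * ((1:ℝ)/4) ^ j := by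
    intro ξ j
    have h := hGkey (ξ / 2 ^ j)
    have heq : C * (ξ / 2 ^ j) ^ 2 = C * ξ ^ 2 * ((1:ℝ)/4) ^ j := by
      rw [div_pow, hq j, hquarterj j]; ring
    rwa [heq] at h
  have hdj : ∀ ξ : ℝ, ∀ j : ℕ, ‖a ξ j - 1‖ ≤ C * ξ ^ 2 * (1/2) ^ j := by
    intro ξ j
    calc ‖a ξ j - 1‖ ≤ ((2 ^ j : ℕ) : ℝ) * ‖ft g (ξ / 2 ^ j) - 1‖ :=
          pow_sub_one_le (hGle1 _) _
      _ ≤ (2 ^ j : ℝ) * (C * ξ ^ 2 * ((1:ℝ)/4) ^ j) := by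
          push_cast
          exact mul_le_mul_of_nonneg_left (hGj ξ j) (hpow_pos j).le
      _ = C * ξ ^ 2 * (1/2) ^ j := by
          rw [show (2:ℝ) ^ j * (C * ξ ^ 2 * ((1:ℝ)/4) ^ j)
            = C * ξ ^ 2 * ((2:ℝ) ^ j * ((1:ℝ)/4) ^ j) from by ring, hmul24 j]
  have hsummable_geo : Summable fun j : ℕ => ((1:ℝ)/2) ^ j := summable_geometric_two
  have hsum_d : ∀ ξ : ℝ, Summable fun j => ‖a ξ j - 1‖ := by
    intro ξ
    refine Summable.of_nonneg_of_le (fun j => norm_nonneg _) (hdj ξ)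
      ((hsummable_geo.mul_left (C * ξ ^ 2)))
  have htsum_d : ∀ ξ : ℝ, ∑' j, ‖a ξ j - 1‖ ≤ 2 * (C * ξ ^ 2) := by
    intro ξ
    calc ∑' j, ‖a ξ j - 1‖ ≤ ∑' j, C * ξ ^ 2 * (1/2) ^ j :=
          Summable.tsum_le_tsum (hdj ξ) (hsum_d ξ) (hsummable_geo.mul_left _)
      _ = C * ξ ^ 2 * ∑' j, ((1:ℝ)/2) ^ j := tsum_mul_left
      _ = 2 * (C * ξ ^ 2) := by rw [tsum_geometric_two]; ring
  -- the linearization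
  set Sc : ℝ → ℂ := fun ξ => ∑' j : ℕ, ((2 ^ j : ℕ) : ℂ) * (ft g (ξ / 2 ^ j) - 1)
    with hSc_def
  have hsum_lin : ∀ ξ : ℝ, Summable fun j : ℕ => ((2 ^ j : ℕ) : ℂ) * (ft g (ξ / 2 ^ j) - 1) := by
    intro ξ
    refine Summable.of_norm ?_
    refine Summable.of_nonneg_of_le (fun j => norm_nonneg _) (fun j => ?_)
      (hsummable_geo.mul_left (C * ξ ^ 2))
    rw [norm_mul]
    have h1 : ‖((2 ^ j : ℕ) : ℂ)‖ = (2:ℝ) ^ j := by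
      rw [Complex.norm_natCast]; push_cast; ring
    rw [h1]
    calc (2:ℝ) ^ j * ‖ft g (ξ / 2 ^ j) - 1‖
        ≤ (2:ℝ) ^ j * (C * ξ ^ 2 * ((1:ℝ)/4) ^ j) :=
          mul_le_mul_of_nonneg_left (hGj ξ j) (hpow_pos j).le
      _ = C * ξ ^ 2 * (1/2) ^ j := by
          rw [show (2:ℝ) ^ j * (C * ξ ^ 2 * ((1:ℝ)/4) ^ j)
            = C * ξ ^ 2 * ((2:ℝ) ^ j * ((1:ℝ)/4) ^ j) from by ring, hmul24 j]
  -- main quantitative bound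
  have hmain : ∀ ξ : ℝ, ‖ft f ξ - 1 - Sc ξ‖ ≤ 6 * C ^ 2 * ξ ^ 4 := by
    intro ξ
    have hstep1 : ‖ft f ξ - 1 - ∑' j, (a ξ j - 1)‖ ≤ (2 * (C * ξ ^ 2)) ^ 2 := by
      rw [hft ξ]
      refine (tprod_expand (a ξ) (ha1 ξ) (hsum_d ξ)).trans ?_
      have := htsum_d ξ
      have h0 : 0 ≤ ∑' j, ‖a ξ j - 1‖ := tsum_nonneg fun j => norm_nonneg _
      nlinarith
    have hstep2 : ‖(∑' j, (a ξ j - 1)) - Sc ξ‖ ≤ 2 * (C ^ 2 * ξ ^ 4) := by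
      have hsa : Summable fun j => a ξ j - 1 := (hsum_d ξ).of_norm
      have hterm : ∀ j : ℕ, ‖a ξ j - 1 - ((2 ^ j : ℕ) : ℂ) * (ft g (ξ / 2 ^ j) - 1)‖
          ≤ C ^ 2 * ξ ^ 4 * (1/2) ^ j := by
        intro j
        calc ‖a ξ j - 1 - ((2 ^ j : ℕ) : ℂ) * (ft g (ξ / 2 ^ j) - 1)‖
              ≤ (((2 ^ j : ℕ) : ℝ) * ‖ft g (ξ / 2 ^ j) - 1‖) ^ 2 :=
                pow_expand_le (hGle1 _) _
            _ ≤ (C * ξ ^ 2 * (1/2) ^ j) ^ 2 := by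
                have hle : ((2 ^ j : ℕ) : ℝ) * ‖ft g (ξ / 2 ^ j) - 1‖
                    ≤ C * ξ ^ 2 * (1/2) ^ j := by
                  push_cast
                  calc (2:ℝ) ^ j * ‖ft g (ξ / 2 ^ j) - 1‖
                      ≤ (2:ℝ) ^ j * (C * ξ ^ 2 * ((1:ℝ)/4) ^ j) :=
                        mul_le_mul_of_nonneg_left (hGj ξ j) (hpow_pos j).le
                    _ = C * ξ ^ 2 * (1/2) ^ j := by
                        rw [show (2:ℝ) ^ j * (C * ξ ^ 2 * ((1:ℝ)/4) ^ j)
                          = C * ξ ^ 2 * ((2:ℝ) ^ j * ((1:ℝ)/4) ^ j) from by ring, hmul24 j]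
                have h0 : (0:ℝ) ≤ ((2 ^ j : ℕ) : ℝ) * ‖ft g (ξ / 2 ^ j) - 1‖ :=
                  mul_nonneg (by positivity) (norm_nonneg _)
                exact pow_le_pow_left₀ h0 hle 2
            _ = C ^ 2 * ξ ^ 4 * (1/2) ^ j * (1/2) ^ j := by ring
            _ ≤ C ^ 2 * ξ ^ 4 * (1/2) ^ j * 1 := by
                have h1 : ((1:ℝ)/2) ^ j ≤ 1 := pow_le_one₀ (by norm_num) (by norm_num)
                exact mul_le_mul_of_nonneg_left h1 (by positivity)
            _ = C ^ 2 * ξ ^ 4 * (1/2) ^ j := by ring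
      have hsn : Summable fun j => ‖a ξ j - 1 - ((2 ^ j : ℕ) : ℂ) * (ft g (ξ / 2 ^ j) - 1)‖ :=
        Summable.of_nonneg_of_le (fun j => norm_nonneg _) hterm
          (hsummable_geo.mul_left (C ^ 2 * ξ ^ 4))
      rw [hSc_def, ← Summable.tsum_sub hsa (hsum_lin ξ)]
      calc ‖∑' j, (a ξ j - 1 - ((2 ^ j : ℕ) : ℂ) * (ft g (ξ / 2 ^ j) - 1))‖
          ≤ ∑' j, ‖a ξ j - 1 - ((2 ^ j : ℕ) : ℂ) * (ft g (ξ / 2 ^ j) - 1)‖ :=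
            norm_tsum_le_tsum_norm hsn
        _ ≤ ∑' j, (C ^ 2 * ξ ^ 4 * ((1:ℝ)/2) ^ j) :=
            Summable.tsum_le_tsum hterm hsn (hsummable_geo.mul_left _)
        _ = C ^ 2 * ξ ^ 4 * ∑' j, ((1:ℝ)/2) ^ j := tsum_mul_left
        _ = 2 * (C ^ 2 * ξ ^ 4) := by rw [tsum_geometric_two]; ring
    calc ‖ft f ξ - 1 - Sc ξ‖
        = ‖(ft f ξ - 1 - ∑' j, (a ξ j - 1)) + ((∑' j, (a ξ j - 1)) - Sc ξ)‖ := by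
          congr 1; ring
      _ ≤ ‖ft f ξ - 1 - ∑' j, (a ξ j - 1)‖ + ‖(∑' j, (a ξ j - 1)) - Sc ξ‖ :=
          norm_add_le _ _
      _ ≤ (2 * (C * ξ ^ 2)) ^ 2 + 2 * (C ^ 2 * ξ ^ 4) := add_le_add hstep1 hstep2
      _ = 6 * C ^ 2 * ξ ^ 4 := by ring
  -- real part of Sc
  set T : ℝ → ℝ := fun ξ => ∑' j : ℕ, (2:ℝ) ^ j * (1 - (ft g (ξ / 2 ^ j)).re) with hT_def
  have hsumT : ∀ ξ : ℝ, Summable fun j : ℕ => (2:ℝ) ^ j * (1 - (ft g (ξ / 2 ^ j)).re) := by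
    intro ξ
    refine Summable.of_norm ?_
    refine Summable.of_nonneg_of_le (fun j => norm_nonneg _) (fun j => ?_)
      (hsummable_geo.mul_left (C * ξ ^ 2))
    rw [Real.norm_eq_abs, abs_mul, abs_of_nonneg (hpow_pos j).le]
    have habs : |1 - (ft g (ξ / 2 ^ j)).re| ≤ ‖ft g (ξ / 2 ^ j) - 1‖ := by
      rw [abs_sub_comm]
      calc |(ft g (ξ / 2 ^ j)).re - 1| = |(ft g (ξ / 2 ^ j) - 1).re| := by
            simp [Complex.sub_re]
        _ ≤ ‖ft g (ξ / 2 ^ j) - 1‖ := Complex.abs_re_le_norm _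
        _ = ‖ft g (ξ / 2 ^ j) - 1‖ := rfl
    calc (2:ℝ) ^ j * |1 - (ft g (ξ / 2 ^ j)).re|
        ≤ (2:ℝ) ^ j * (C * ξ ^ 2 * ((1:ℝ)/4) ^ j) :=
          mul_le_mul_of_nonneg_left (habs.trans (hGj ξ j)) (hpow_pos j).le
      _ = C * ξ ^ 2 * (1/2) ^ j := by
          rw [show (2:ℝ) ^ j * (C * ξ ^ 2 * ((1:ℝ)/4) ^ j)
            = C * ξ ^ 2 * ((2:ℝ) ^ j * ((1:ℝ)/4) ^ j) from by ring, hmul24 j]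
  have hSc_re : ∀ ξ : ℝ, (Sc ξ).re = -(T ξ) := by
    intro ξ
    rw [hSc_def]
    have := Complex.reCLM.map_tsum (hsum_lin ξ)
    rw [show (Complex.reCLM (∑' j : ℕ, ((2 ^ j : ℕ) : ℂ) * (ft g (ξ / 2 ^ j) - 1)))
        = (∑' j : ℕ, ((2 ^ j : ℕ) : ℂ) * (ft g (ξ / 2 ^ j) - 1)).re from rfl] at this
    rw [this, hT_def, ← tsum_neg]
    congr 1
    funext j
    rw [show (Complex.reCLM (((2 ^ j : ℕ) : ℂ) * (ft g (ξ / 2 ^ j) - 1)))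
        = ((((2 ^ j : ℕ) : ℂ)) * (ft g (ξ / 2 ^ j) - 1)).re from rfl,
      show (((2 ^ j : ℕ) : ℂ)) = ((((2:ℝ) ^ j : ℝ)) : ℂ) from by push_cast; ring]
    simp only [Complex.mul_re, Complex.ofReal_re, Complex.ofReal_im, Complex.sub_re,
      Complex.sub_im, Complex.one_re, Complex.one_im]
    ring
  -- Tannery: limit of 2T(ξ)/ξ²
  have hT_lim : Filter.Tendsto (fun ξ : ℝ => 2 * T ξ / ξ ^ 2) (𝓝[≠] (0:ℝ))
      (𝓝 (2 * m2g)) := by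
    have hbase := tendsto_mom2 hg_nonneg hg_int hg_mass hg_mom2
    have key : Filter.Tendsto
        (fun ξ : ℝ => ∑' j : ℕ, 2 * ((2:ℝ) ^ j * (1 - (ft g (ξ / 2 ^ j)).re)) / ξ ^ 2)
        (𝓝[≠] (0:ℝ)) (𝓝 (∑' j : ℕ, ((1:ℝ)/2) ^ j * m2g)) := by
      apply tendsto_tsum_of_dominated_convergence
        (bound := fun j : ℕ => m2g * ((1:ℝ)/2) ^ j)
        (hsummable_geo.mul_left m2g)
      · intro j
        have hcomp := hbase.comp (tendsto_div_scale ((2:ℝ) ^ j) (hpow_pos j).ne')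
        have := hcomp.const_mul (((1:ℝ)/2) ^ j)
        refine (this.congr' ?_).mono_right (le_of_eq ?_)
        · filter_upwards [self_mem_nhdsWithin] with ξ (hξ : ξ ≠ 0)
          show ((1:ℝ)/2) ^ j * (2 * (1 - (ft g (ξ / 2 ^ j)).re) / (ξ / 2 ^ j) ^ 2)
              = 2 * ((2:ℝ) ^ j * (1 - (ft g (ξ / 2 ^ j)).re)) / ξ ^ 2
          rw [div_pow]
          field_simp
          ring
        · rw [mul_comm]
      · filter_upwards [self_mem_nhdsWithin] with ξ (hξ : ξ ≠ 0)
        intro j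
        have hξ2 : (0:ℝ) < ξ ^ 2 := by positivity
        have h5 := one_sub_re_ft_le hg_nonneg hg_int hg_mass hg_mom2 (ξ / 2 ^ j)
        have h6 := one_sub_re_ft_nonneg hg_nonneg hg_int hg_mass (ξ / 2 ^ j)
        rw [Real.norm_eq_abs, abs_of_nonneg (by positivity)]
        rw [div_le_iff₀ hξ2]
        have heq2 : (ξ / 2 ^ j) ^ 2 / 2 * m2g = ξ ^ 2 / 4 ^ j / 2 * m2g := by
          rw [div_pow, hq j]
        rw [heq2] at h5
        calc 2 * ((2:ℝ) ^ j * (1 - (ft g (ξ / 2 ^ j)).re))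
            ≤ 2 * ((2:ℝ) ^ j * (ξ ^ 2 / 4 ^ j / 2 * m2g)) := by
              have := mul_le_mul_of_nonneg_left h5 (hpow_pos j).le
              linarith
          _ = m2g * (1/2) ^ j * ξ ^ 2 := by
              rw [← hdiv24 j]
              ring
    have htsum_val : ∑' j : ℕ, ((1:ℝ)/2) ^ j * m2g = 2 * m2g := by
      rw [tsum_mul_right, tsum_geometric_two]
    rw [htsum_val] at key
    refine key.congr fun ξ => ?_
    calc ∑' j : ℕ, 2 * ((2:ℝ) ^ j * (1 - (ft g (ξ / 2 ^ j)).re)) / ξ ^ 2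
        = ∑' j : ℕ, (2 / ξ ^ 2) * ((2:ℝ) ^ j * (1 - (ft g (ξ / 2 ^ j)).re)) := by
          congr 1; funext j; ring
      _ = (2 / ξ ^ 2) * T ξ := tsum_mul_left
      _ = 2 * T ξ / ξ ^ 2 := by ring
  -- conclusion
  have h1 : Filter.Tendsto (fun ξ : ℝ => 2 * (1 - (ft f ξ).re) / ξ ^ 2) (𝓝[≠] (0:ℝ))
      (𝓝 (∫ x : ℝ, x ^ 2 * f x)) := tendsto_mom2 hf_nonneg hf_int hf_mass hf_mom2
  have herr : Filter.Tendsto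
      (fun ξ : ℝ => 2 * (1 - (ft f ξ).re) / ξ ^ 2 - 2 * T ξ / ξ ^ 2) (𝓝[≠] (0:ℝ)) (𝓝 0) := by
    have hboundev : ∀ᶠ ξ in 𝓝[≠] (0:ℝ),
        ‖2 * (1 - (ft f ξ).re) / ξ ^ 2 - 2 * T ξ / ξ ^ 2‖ ≤ 12 * C ^ 2 * ξ ^ 2 := by
      filter_upwards [self_mem_nhdsWithin] with ξ (hξ : ξ ≠ 0)
      have hξ2 : (0:ℝ) < ξ ^ 2 := by positivity
      have hre : |(1 - (ft f ξ).re) - T ξ| ≤ 6 * C ^ 2 * ξ ^ 4 := by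
        have h7 : |(ft f ξ - 1 - Sc ξ).re| ≤ ‖ft f ξ - 1 - Sc ξ‖ :=
          Complex.abs_re_le_norm _
        have h8 : (ft f ξ - 1 - Sc ξ).re = -((1 - (ft f ξ).re) - T ξ) := by
          simp [Complex.sub_re, hSc_re ξ]
          ring
        rw [h8, abs_neg] at h7
        exact h7.trans (hmain ξ)
      rw [Real.norm_eq_abs]
      have heq3 : 2 * (1 - (ft f ξ).re) / ξ ^ 2 - 2 * T ξ / ξ ^ 2
          = 2 * ((1 - (ft f ξ).re) - T ξ) / ξ ^ 2 := by ring
      rw [heq3, abs_div, abs_of_nonneg hξ2.le, div_le_iff₀ hξ2, abs_mul]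
      rw [abs_of_nonneg (by norm_num : (0:ℝ) ≤ 2)]
      calc 2 * |(1 - (ft f ξ).re) - T ξ| ≤ 2 * (6 * C ^ 2 * ξ ^ 4) := by linarith
        _ = 12 * C ^ 2 * ξ ^ 2 * ξ ^ 2 := by ring
    have hbound0 : Filter.Tendsto (fun ξ : ℝ => 12 * C ^ 2 * ξ ^ 2) (𝓝[≠] (0:ℝ)) (𝓝 0) := by
      have hcont : Filter.Tendsto (fun ξ : ℝ => 12 * C ^ 2 * ξ ^ 2) (𝓝 (0:ℝ))
          (𝓝 (12 * C ^ 2 * 0 ^ 2)) := by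
        exact (continuous_const.mul (continuous_pow 2)).tendsto 0
      simp only [ne_eq, OfNat.ofNat_ne_zero, not_false_eq_true, zero_pow, mul_zero] at hcont
      exact hcont.mono_left nhdsWithin_le_nhds
    exact squeeze_zero_norm' hboundev hbound0
  have h2 : Filter.Tendsto (fun ξ : ℝ => 2 * (1 - (ft f ξ).re) / ξ ^ 2) (𝓝[≠] (0:ℝ))
      (𝓝 (2 * m2g)) := by
    have := hT_lim.add herr
    rw [add_zero] at this
    refine this.congr fun ξ => ?_
    ring
  exact tendsto_nhds_unique h1 h2
end

section
/- Let 0 < λ < 1 and let g be a probability density on ℝ with finite second moment and zero mean. Then the function f̂(ξ) = ∏_{k=0}^{∞} ∏_{j=0}^{k} ĝ(λ^j (1−λ)^{k−j} ξ)^{binom(k,j)} satisfies the functional equation f̂(ξ) = f̂(λξ) f̂((1−λ)ξ) ĝ(ξ), and the corresponding probability measure f has variance Var[f] = Var[g] / (2λ(1−λ)). -/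
open MeasureTheory Real

/-- `f̂(ξ) = ∏_{k=0}^∞ ∏_{j=0}^{k} ĝ(λ^j (1-λ)^{k-j} ξ)^(binom(k,j))`. -/
noncomputable def fhat (g : ℝ → ℝ) (lam : ℝ) (ξ : ℝ) : ℂ :=
  ∏' k : ℕ, ∏ j ∈ Finset.range (k + 1),
    (ft g (lam ^ j * (1 - lam) ^ (k - j) * ξ)) ^ (Nat.choose k j)

namespace St4

lemma exp_I_bound (z : ℂ) (hz : z.re = 0) : ‖Complex.exp z - 1 - z‖ ≤ 3 * ‖z‖ ^ 2 := by
  rcases le_or_gt ‖z‖ 1 with h | h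
  · calc ‖Complex.exp z - 1 - z‖ ≤ ‖z‖ ^ 2 := Complex.norm_exp_sub_one_sub_id_le h
    _ ≤ 3 * ‖z‖ ^ 2 := by nlinarith [sq_nonneg ‖z‖]
  · have he : ‖Complex.exp z‖ = 1 := by
      rw [Complex.norm_exp, hz, Real.exp_zero]
    calc ‖Complex.exp z - 1 - z‖ ≤ ‖Complex.exp z - 1‖ + ‖z‖ := norm_sub_le _ _
      _ ≤ ‖Complex.exp z‖ + ‖(1:ℂ)‖ + ‖z‖ := by gcongr; exact norm_sub_le _ _
      _ = 2 + ‖z‖ := by rw [he, norm_one]; ring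
      _ ≤ 3 * ‖z‖ ^ 2 := by nlinarith
lemma norm_pow_sub_one_le {a : ℂ} {c : ℝ} (hc : 0 ≤ c) (h : ‖a - 1‖ ≤ c) (n : ℕ) :
    ‖a ^ n - 1‖ ≤ (1 + c) ^ n - 1 := by
  induction n with
  | zero => simp
  | succ n ih =>
    have ha : ‖a‖ ≤ 1 + c := by
      calc ‖a‖ = ‖a - 1 + 1‖ := by ring_nf
      _ ≤ ‖a - 1‖ + ‖(1:ℂ)‖ := norm_add_le _ _
      _ ≤ 1 + c := by rw [norm_one]; linarith
    have h1 : (1:ℝ) ≤ (1 + c) ^ n := one_le_pow₀ (by linarith)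
    calc ‖a ^ (n+1) - 1‖ = ‖a ^ n * (a - 1) + (a ^ n - 1)‖ := by ring_nf
      _ ≤ ‖a ^ n * (a - 1)‖ + ‖a ^ n - 1‖ := norm_add_le _ _
      _ = ‖a‖ ^ n * ‖a - 1‖ + ‖a ^ n - 1‖ := by rw [norm_mul, norm_pow]
      _ ≤ (1 + c) ^ n * c + ((1 + c) ^ n - 1) := by gcongr
      _ = (1 + c) ^ (n+1) - 1 := by ring

lemma norm_prod_sub_one_le {ι : Type*} (s : Finset ι) (f : ι → ℂ) (c : ι → ℝ)
    (hc : ∀ i ∈ s, 0 ≤ c i) (h : ∀ i ∈ s, ‖f i - 1‖ ≤ c i) :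
    ‖(∏ i ∈ s, f i) - 1‖ ≤ (∏ i ∈ s, (1 + c i)) - 1 := by
  induction s using Finset.cons_induction with
  | empty => simp
  | cons j s hj ih =>
    have hc' : ∀ i ∈ s, 0 ≤ c i := fun i hi => hc i (Finset.mem_cons_of_mem hi)
    have h' : ∀ i ∈ s, ‖f i - 1‖ ≤ c i := fun i hi => h i (Finset.mem_cons_of_mem hi)
    have ih' := ih hc' h'
    have hprod1 : (1:ℝ) ≤ ∏ i ∈ s, (1 + c i) := by
      have := Finset.prod_le_prod (f := fun _ : ι => (1:ℝ)) (g := fun i => 1 + c i)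
        (fun i _ => zero_le_one) (fun i hi => by show (1:ℝ) ≤ 1 + c i; linarith [hc' i hi])
      simpa using this
    have hnp : ‖∏ i ∈ s, f i‖ ≤ ∏ i ∈ s, (1 + c i) := by
      calc ‖∏ i ∈ s, f i‖ = ‖(∏ i ∈ s, f i) - 1 + 1‖ := by ring_nf
        _ ≤ ‖(∏ i ∈ s, f i) - 1‖ + ‖(1:ℂ)‖ := norm_add_le _ _
        _ ≤ _ := by rw [norm_one]; linarith
    have hcj := hc j (Finset.mem_cons_self j s)
    have hfj := h j (Finset.mem_cons_self j s)
    rw [Finset.prod_cons, Finset.prod_cons]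
    calc ‖f j * ∏ i ∈ s, f i - 1‖
        = ‖(f j - 1) * ∏ i ∈ s, f i + ((∏ i ∈ s, f i) - 1)‖ := by ring_nf
      _ ≤ ‖(f j - 1) * ∏ i ∈ s, f i‖ + ‖(∏ i ∈ s, f i) - 1‖ := norm_add_le _ _
      _ = ‖f j - 1‖ * ‖∏ i ∈ s, f i‖ + ‖(∏ i ∈ s, f i) - 1‖ := by rw [norm_mul]
      _ ≤ c j * ∏ i ∈ s, (1 + c i) + ((∏ i ∈ s, (1 + c i)) - 1) := by gcongr
      _ = (1 + c j) * (∏ i ∈ s, (1 + c i)) - 1 := by ring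



lemma cont_e (η : ℝ) : Continuous (fun x : ℝ => Complex.exp (-(Complex.I * η * x))) := by
  fun_prop

lemma integrable_mul_e {h : ℝ → ℝ} (hint : Integrable h) (η : ℝ) :
    Integrable (fun x : ℝ => (h x : ℂ) * Complex.exp (-(Complex.I * η * x))) := by
  apply Integrable.mono' hint.norm
  · exact (Complex.continuous_ofReal.comp_aestronglyMeasurable hint.1).mul
      (cont_e η).aestronglyMeasurable
  · filter_upwards with x
    rw [norm_mul]
    have : ‖Complex.exp (-(Complex.I * η * x))‖ = 1 := by
      rw [Complex.norm_exp]
      simp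
    rw [this, mul_one, Complex.norm_real]

lemma ft_sub_one_bound (g : ℝ → ℝ)
    (hg_nonneg : ∀ x, 0 ≤ g x)
    (hg_int : Integrable g)
    (hg_mass : ∫ x : ℝ, g x = 1)
    (hg_mom1 : Integrable (fun x => x * g x))
    (hg_mom2 : Integrable (fun x => x ^ 2 * g x))
    (hg_mean : (∫ x : ℝ, x * g x) = 0) (η : ℝ) :
    ‖ft g η - 1‖ ≤ (3 * ∫ x : ℝ, x ^ 2 * g x) * η ^ 2 := by
  set e : ℝ → ℂ := fun x => Complex.exp (-(Complex.I * η * x)) with he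
  have hA : Integrable (fun x : ℝ => (g x : ℂ) * e x) := integrable_mul_e hg_int η
  have hB : Integrable (fun x : ℝ => ((g x : ℝ) : ℂ)) := hg_int.ofReal
  have hC : Integrable (fun x : ℝ => (g x : ℂ) * (Complex.I * η * x)) := by
    have h0 : Integrable (fun x : ℝ => (Complex.I * η) * ((x * g x : ℝ) : ℂ)) :=
      hg_mom1.ofReal.const_mul (Complex.I * η)
    apply h0.congr
    filter_upwards with x
    push_cast
    ring
  have h1 : (∫ x : ℝ, ((g x : ℝ) : ℂ)) = 1 := by
    rw [← Complex.ofReal_one, ← hg_mass]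
    exact integral_ofReal
  have h2 : (∫ x : ℝ, (g x : ℂ) * (Complex.I * η * x)) = 0 := by
    have : (fun x : ℝ => (g x : ℂ) * (Complex.I * η * x))
        = fun x : ℝ => (Complex.I * η) * (((x * g x : ℝ)) : ℂ) := by
      funext x; push_cast; ring
    have h3 : (∫ a : ℝ, ((a * g a : ℝ) : ℂ)) = ((∫ a : ℝ, a * g a : ℝ) : ℂ) :=
      integral_ofReal
    rw [this, integral_const_mul, h3, hg_mean]
    simp
  have key : ft g η - 1 = ∫ x : ℝ, (g x : ℂ) * (e x - 1 + Complex.I * η * x) := by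
    have : (fun x : ℝ => (g x : ℂ) * (e x - 1 + Complex.I * η * x))
        = fun x : ℝ => ((g x : ℂ) * e x - (g x : ℂ)) + (g x : ℂ) * (Complex.I * η * x) := by
      funext x; ring
    have hAB : Integrable (fun x : ℝ => (g x : ℂ) * e x - (g x : ℂ)) := hA.sub hB
    rw [this, integral_add hAB hC, integral_sub hA hB, h1, h2, add_zero]
    rfl
  rw [key]
  calc ‖∫ x : ℝ, (g x : ℂ) * (e x - 1 + Complex.I * η * x)‖
      ≤ ∫ x : ℝ, ‖(g x : ℂ) * (e x - 1 + Complex.I * η * x)‖ :=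
        norm_integral_le_integral_norm _
    _ ≤ ∫ x : ℝ, (3 * η ^ 2) * (x ^ 2 * g x) := by
        apply integral_mono_of_nonneg
        · filter_upwards with x; positivity
        · exact hg_mom2.const_mul _
        · filter_upwards with x
          rw [norm_mul, Complex.norm_real, Real.norm_eq_abs, abs_of_nonneg (hg_nonneg x)]
          have hz : e x - 1 + Complex.I * η * x
              = Complex.exp (-(Complex.I * η * x)) - 1 - (-(Complex.I * η * x)) := by
            rw [he]; ring
          rw [hz]
          have hre : (-(Complex.I * (η:ℂ) * (x:ℂ))).re = 0 := by simp
          have hnz : ‖(-(Complex.I * (η:ℂ) * (x:ℂ)))‖ ^ 2 = η ^ 2 * x ^ 2 := by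
            rw [norm_neg]
            rw [norm_mul, norm_mul, Complex.norm_I, one_mul, Complex.norm_real,
              Complex.norm_real]
            rw [mul_pow, Real.norm_eq_abs, Real.norm_eq_abs, sq_abs, sq_abs]
          calc g x * ‖Complex.exp (-(Complex.I * η * x)) - 1 - (-(Complex.I * η * x))‖
              ≤ g x * (3 * ‖(-(Complex.I * (η:ℂ) * (x:ℂ)))‖ ^ 2) := by
                apply mul_le_mul_of_nonneg_left _ (hg_nonneg x)
                exact exp_I_bound _ hre
            _ = 3 * η ^ 2 * (x ^ 2 * g x) := by rw [hnz]; ring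
    _ = (3 * ∫ x : ℝ, x ^ 2 * g x) * η ^ 2 := by
        rw [integral_const_mul]; ring


/-- The inner finite product. -/
noncomputable def P (g : ℝ → ℝ) (lam : ℝ) (ξ : ℝ) (k : ℕ) : ℂ :=
  ∏ j ∈ Finset.range (k + 1), (ft g (lam ^ j * (1 - lam) ^ (k - j) * ξ)) ^ (Nat.choose k j)

lemma fhat_eq (g : ℝ → ℝ) (lam : ℝ) (ξ : ℝ) : fhat g lam ξ = ∏' k : ℕ, P g lam ξ k := rfl

lemma exp_sub_one_le (t : ℝ) (ht : 0 ≤ t) : Real.exp t - 1 ≤ t * Real.exp t := by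
  have h := Real.add_one_le_exp (-t)
  have hp := Real.exp_pos t
  have h2 : Real.exp (-t) * Real.exp t = 1 := by rw [← Real.exp_add]; simp
  nlinarith

section Bound

variable {g : ℝ → ℝ} {lam : ℝ} {M : ℝ}

lemma P_sub_one_bound (hM : 0 ≤ M) (hft : ∀ η : ℝ, ‖ft g η - 1‖ ≤ M * η ^ 2)
    (hlam₀ : 0 < lam) (hlam₁ : lam < 1) (ξ : ℝ) (k : ℕ) :
    ‖P g lam ξ k - 1‖ ≤ (M * ξ ^ 2 * Real.exp (M * ξ ^ 2)) * (lam ^ 2 + (1 - lam) ^ 2) ^ k := by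
  set r : ℝ := lam ^ 2 + (1 - lam) ^ 2 with hrdef
  have hr0 : 0 < r := by positivity
  have hr1 : r < 1 := by nlinarith
  set u : ℕ → ℝ := fun j => M * (lam ^ j * (1 - lam) ^ (k - j) * ξ) ^ 2 with hu
  have hu0 : ∀ j, 0 ≤ u j := fun j => by positivity
  -- step 1: ‖P - 1‖ ≤ ∏ (1+u j)^(choose k j) - 1
  have step1 : ‖P g lam ξ k - 1‖ ≤
      (∏ j ∈ Finset.range (k + 1), (1 + u j) ^ (Nat.choose k j)) - 1 := by
    have := norm_prod_sub_one_le (Finset.range (k + 1))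
      (fun j => (ft g (lam ^ j * (1 - lam) ^ (k - j) * ξ)) ^ (Nat.choose k j))
      (fun j => (1 + u j) ^ (Nat.choose k j) - 1)
      (fun j _ => by
        have : (1:ℝ) ≤ (1 + u j) ^ (Nat.choose k j) := one_le_pow₀ (by linarith [hu0 j])
        show (0:ℝ) ≤ (1 + u j) ^ (Nat.choose k j) - 1
        linarith)
      (fun j _ => norm_pow_sub_one_le (by positivity) (hft _) _)
    simpa [P] using this
  -- step 2: ∏ (1+u j)^(choose k j) ≤ exp (M ξ² r^k)
  have hsum : ∑ j ∈ Finset.range (k + 1), (Nat.choose k j : ℝ) * u j = M * ξ ^ 2 * r ^ k := by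
    have hpow : (lam ^ 2 + (1 - lam) ^ 2) ^ k
        = ∑ j ∈ Finset.range (k + 1), (lam ^ 2) ^ j * ((1 - lam) ^ 2) ^ (k - j)
            * (Nat.choose k j : ℝ) := add_pow _ _ _
    rw [hrdef, hpow, Finset.mul_sum, Finset.sum_congr rfl]
    intro j _
    show (Nat.choose k j : ℝ) * (M * (lam ^ j * (1 - lam) ^ (k - j) * ξ) ^ 2) = _
    rw [mul_pow, mul_pow, ← pow_mul lam, ← pow_mul (1 - lam), ← pow_mul' lam, ← pow_mul' (1 - lam)]
    ring
  have step2 : (∏ j ∈ Finset.range (k + 1), (1 + u j) ^ (Nat.choose k j))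
      ≤ Real.exp (M * ξ ^ 2 * r ^ k) := by
    rw [← hsum, Real.exp_sum]
    apply Finset.prod_le_prod
    · intro j _; positivity
    · intro j _
      calc (1 + u j) ^ (Nat.choose k j) ≤ Real.exp (u j) ^ (Nat.choose k j) :=
            pow_le_pow_left₀ (by linarith [hu0 j]) (by linarith [Real.add_one_le_exp (u j)]) _
        _ = Real.exp ((Nat.choose k j : ℝ) * u j) := (Real.exp_nat_mul _ _).symm
  -- conclude
  have hrk0 : (0:ℝ) ≤ r ^ k := by positivity
  have hrk1 : r ^ k ≤ 1 := pow_le_one₀ hr0.le hr1.le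
  have hMξ : 0 ≤ M * ξ ^ 2 := by positivity
  have h1 : M * ξ ^ 2 * r ^ k ≤ M * ξ ^ 2 := by nlinarith
  have h2 : Real.exp (M * ξ ^ 2 * r ^ k) ≤ Real.exp (M * ξ ^ 2) := Real.exp_le_exp.mpr h1
  have h3 := exp_sub_one_le (M * ξ ^ 2 * r ^ k) (by positivity)
  have h5 := mul_le_mul_of_nonneg_left h2 (mul_nonneg hMξ hrk0)
  have h4 : Real.exp (M * ξ ^ 2 * r ^ k) - 1
      ≤ (M * ξ ^ 2 * Real.exp (M * ξ ^ 2)) * r ^ k := by nlinarith [h3, h5]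
  calc ‖P g lam ξ k - 1‖
      ≤ (∏ j ∈ Finset.range (k + 1), (1 + u j) ^ (Nat.choose k j)) - 1 := step1
    _ ≤ Real.exp (M * ξ ^ 2 * r ^ k) - 1 := by linarith [step2]
    _ ≤ (M * ξ ^ 2 * Real.exp (M * ξ ^ 2)) * r ^ k := h4

lemma multipliable_P (hM : 0 ≤ M) (hft : ∀ η : ℝ, ‖ft g η - 1‖ ≤ M * η ^ 2)
    (hlam₀ : 0 < lam) (hlam₁ : lam < 1) (ξ : ℝ) :
    Multipliable (fun k : ℕ => P g lam ξ k) := by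
  set r : ℝ := lam ^ 2 + (1 - lam) ^ 2 with hrdef
  have hr0 : 0 < r := by positivity
  have hr1 : r < 1 := by nlinarith
  set C : ℝ := M * ξ ^ 2 * Real.exp (M * ξ ^ 2) with hC
  have hbd : ∀ k : ℕ, ‖P g lam ξ k - 1‖ ≤ C * r ^ k :=
    fun k => P_sub_one_bound hM hft hlam₀ hlam₁ ξ k
  by_cases hz : ∃ k, P g lam ξ k = 0
  · obtain ⟨k₀, hk₀⟩ := hz
    refine ⟨0, ?_⟩
    apply Filter.Tendsto.congr' _ (tendsto_const_nhds (x := (0:ℂ)))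
    filter_upwards [Filter.eventually_ge_atTop ({k₀} : Finset ℕ)] with s hs
    exact (Finset.prod_eq_zero (hs (Finset.mem_singleton_self k₀)) hk₀).symm
  · push_neg at hz
    -- logs are summable
    have hlog : Summable (fun k : ℕ => Complex.log (P g lam ξ k)) := by
      apply Summable.of_norm
      apply Summable.of_norm_bounded_eventually_nat (g := fun k => (3/2 * C) * r ^ k)
      · exact (summable_geometric_of_lt_one hr0.le hr1).mul_left _
      · have htend : Filter.Tendsto (fun k : ℕ => C * r ^ k) Filter.atTop (nhds 0) := by
          simpa using (tendsto_pow_atTop_nhds_zero_of_lt_one hr0.le hr1).const_mul C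
        filter_upwards [htend.eventually (gt_mem_nhds (by norm_num : (0:ℝ) < 1/2))]
          with k hk
        replace hk : C * r ^ k ≤ 1/2 := hk.le
        have h1 : ‖P g lam ξ k - 1‖ ≤ 1/2 := (hbd k).trans hk
        have h2 : ‖Complex.log (1 + (P g lam ξ k - 1))‖ ≤ 3/2 * ‖P g lam ξ k - 1‖ :=
          Complex.norm_log_one_add_half_le_self h1
        rw [add_sub_cancel] at h2
        rw [norm_norm]
        calc ‖Complex.log (P g lam ξ k)‖ ≤ 3/2 * ‖P g lam ξ k - 1‖ := h2
          _ ≤ 3/2 * (C * r ^ k) := by linarith [hbd k]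
          _ = 3/2 * C * r ^ k := by ring
    have hprod := hlog.hasSum.cexp
    refine ⟨_, hprod.congr_fun ?_⟩
    intro k
    exact (Complex.exp_log (hz k)).symm

lemma P_zero (g : ℝ → ℝ) (lam : ℝ) (ξ : ℝ) : P g lam ξ 0 = ft g ξ := by
  simp [P]

lemma P_succ (g : ℝ → ℝ) (lam : ℝ) (ξ : ℝ) (k : ℕ) :
    P g lam ξ (k + 1) = P g lam (lam * ξ) k * P g lam ((1 - lam) * ξ) k := by
  set a : ℕ → ℂ := fun j => ft g (lam ^ j * (1 - lam) ^ (k + 1 - j) * ξ) with ha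
  have h1 : P g lam (lam * ξ) k = ∏ j ∈ Finset.range (k + 1), a (j + 1) ^ (Nat.choose k j) := by
    apply Finset.prod_congr rfl
    intro j hj
    congr 2
    rw [Nat.succ_sub_succ, pow_succ]
    ring
  have h2 : P g lam ((1 - lam) * ξ) k = ∏ j ∈ Finset.range (k + 1), a j ^ (Nat.choose k j) := by
    apply Finset.prod_congr rfl
    intro j hj
    congr 2
    have hjk : j ≤ k := Nat.lt_succ_iff.mp (Finset.mem_range.mp hj)
    rw [Nat.succ_sub hjk, pow_succ]
    ring
  have h3 : P g lam ξ (k + 1) = ∏ j ∈ Finset.range (k + 2), a j ^ (Nat.choose (k + 1) j) := rfl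
  rw [h1, h2, h3]
  rw [Finset.prod_range_succ' (fun j => a j ^ (Nat.choose (k + 1) j)) (k + 1)]
  have h4 : ∀ j, a (j + 1) ^ (Nat.choose (k + 1) (j + 1))
      = a (j + 1) ^ (Nat.choose k j) * a (j + 1) ^ (Nat.choose k (j + 1)) := by
    intro j
    rw [← pow_add, Nat.choose_succ_succ]
  simp only [h4, Nat.choose_zero_right, pow_one]
  rw [Finset.prod_mul_distrib]
  have h5 : (∏ j ∈ Finset.range (k + 1), a (j + 1) ^ (Nat.choose k (j + 1)))
      * a 0 = ∏ j ∈ Finset.range (k + 1), a j ^ (Nat.choose k j) := by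
    have h6 : (∏ j ∈ Finset.range (k + 2), a j ^ (Nat.choose k j))
        = (∏ j ∈ Finset.range (k + 1), a (j + 1) ^ (Nat.choose k (j + 1)))
          * a 0 ^ (Nat.choose k 0) :=
      Finset.prod_range_succ' (fun j => a j ^ (Nat.choose k j)) (k + 1)
    simp only [Nat.choose_zero_right, pow_one] at h6
    have h7 : (∏ j ∈ Finset.range (k + 2), a j ^ (Nat.choose k j))
        = ∏ j ∈ Finset.range (k + 1), a j ^ (Nat.choose k j) := by
      rw [Finset.prod_range_succ]
      simp [Nat.choose_eq_zero_of_lt (Nat.lt_succ_self k)]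
    rw [← h6, h7]
  rw [mul_assoc, h5]

set_option maxHeartbeats 1000000 in
theorem part1 {g : ℝ → ℝ} {lam M : ℝ} (hM : 0 ≤ M)
    (hft : ∀ η : ℝ, ‖ft g η - 1‖ ≤ M * η ^ 2)
    (hlam₀ : 0 < lam) (hlam₁ : lam < 1) (ξ : ℝ) :
    fhat g lam ξ = fhat g lam (lam * ξ) * fhat g lam ((1 - lam) * ξ) * ft g ξ := by
  have hm : ∀ ζ : ℝ, Multipliable (fun k : ℕ => P g lam ζ k) :=
    fun ζ => multipliable_P hM hft hlam₀ hlam₁ ζ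
  rw [fhat_eq, fhat_eq, fhat_eq]
  have hps : (fun k : ℕ => P g lam ξ (k + 1))
      = fun k : ℕ => P g lam (lam * ξ) k * P g lam ((1 - lam) * ξ) k :=
    funext (P_succ g lam ξ)
  have hshift : Multipliable (fun k : ℕ => P g lam ξ (k + 1)) := by
    rw [hps]; exact (hm (lam * ξ)).mul (hm ((1 - lam) * ξ))
  rw [tprod_eq_zero_mul' hshift, P_zero]
  rw [hps, Multipliable.tprod_mul (hm (lam * ξ)) (hm ((1 - lam) * ξ))]
  rw [mul_comm]

end Bound


noncomputable def D1 (h : ℝ → ℝ) (ξ : ℝ) : ℂ :=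
  ∫ x : ℝ, (h x : ℂ) * (-(Complex.I * x)) * Complex.exp (-(Complex.I * ξ * x))

noncomputable def D2 (h : ℝ → ℝ) (ξ : ℝ) : ℂ :=
  ∫ x : ℝ, (h x : ℂ) * (-(Complex.I * x)) * (-(Complex.I * x)) * Complex.exp (-(Complex.I * ξ * x))

lemma hasDerivAt_ftaux (φ : ℝ → ℂ) (hφ : Integrable φ)
    (hφ' : Integrable (fun x : ℝ => (x : ℂ) * φ x)) (ξ₀ : ℝ) :
    HasDerivAt (fun ξ : ℝ => ∫ x : ℝ, φ x * Complex.exp (-(Complex.I * ξ * x)))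
      (∫ x : ℝ, φ x * (-(Complex.I * x)) * Complex.exp (-(Complex.I * ξ₀ * x))) ξ₀ := by
  have hcont : ∀ ξ : ℝ, Continuous (fun x : ℝ => Complex.exp (-(Complex.I * ξ * x))) := by
    intro ξ; fun_prop
  have hcont2 : Continuous (fun x : ℝ => -(Complex.I * (x:ℂ))) := by fun_prop
  have hnorm_e : ∀ (ξ x : ℝ), ‖Complex.exp (-(Complex.I * ξ * x))‖ = 1 := by
    intro ξ x
    rw [Complex.norm_exp]
    simp
  have main := hasDerivAt_integral_of_dominated_loc_of_deriv_le
    (F := fun (ξ : ℝ) (x : ℝ) => φ x * Complex.exp (-(Complex.I * ξ * x)))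
    (F' := fun (ξ : ℝ) (x : ℝ) => φ x * (-(Complex.I * x)) * Complex.exp (-(Complex.I * ξ * x)))
    (x₀ := ξ₀) (bound := fun x : ℝ => ‖x‖ * ‖φ x‖)
    (Metric.ball_mem_nhds ξ₀ one_pos)
    (Filter.Eventually.of_forall (fun ξ =>
      hφ.1.mul (hcont ξ).aestronglyMeasurable))
    (by
      apply Integrable.mono' hφ.norm
      · exact hφ.1.mul (hcont ξ₀).aestronglyMeasurable
      · filter_upwards with x
        rw [norm_mul, hnorm_e, mul_one])
    ((hφ.1.mul hcont2.aestronglyMeasurable).mul (hcont ξ₀).aestronglyMeasurable)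
    (by
      filter_upwards with x ξ _
      rw [norm_mul, norm_mul, hnorm_e, mul_one, norm_neg, norm_mul, Complex.norm_I, one_mul,
        Complex.norm_real]
      exact le_of_eq (mul_comm _ _))
    (by
      apply (hφ'.norm).congr
      filter_upwards with x
      rw [norm_mul, Complex.norm_real])
    (by
      filter_upwards with x ξ _
      have h1 : HasDerivAt (fun z : ℂ => Complex.exp (-(Complex.I * x) * z))
          (Complex.exp (-(Complex.I * x) * ξ) * (-(Complex.I * x) * 1)) (ξ : ℂ) :=
        ((hasDerivAt_id (ξ:ℂ)).const_mul (-(Complex.I * x))).cexp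
      have h2 := (h1.comp_ofReal).const_mul (φ x)
      have harg : ∀ y : ℝ, -(Complex.I * (x:ℂ)) * (y:ℂ) = -(Complex.I * y * x) := by
        intro y; push_cast; ring
      simp only [Function.comp_def, harg] at h2
      exact h2.congr_deriv (by ring))
  exact main.2

lemma ft_hasDerivAt (f : ℝ → ℝ) (hf_int : Integrable f)
    (hf_mom1 : Integrable (fun x => x * f x)) (ξ : ℝ) :
    HasDerivAt (ft f) (D1 f ξ) ξ := by
  have h := hasDerivAt_ftaux (fun x => (f x : ℂ)) hf_int.ofReal
    (by
      apply hf_mom1.ofReal.congr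
      filter_upwards with x
      norm_cast) ξ
  exact h

lemma D1_hasDerivAt (f : ℝ → ℝ) (hf_mom1 : Integrable (fun x => x * f x))
    (hf_mom2 : Integrable (fun x => x ^ 2 * f x)) (hf_meas : AEStronglyMeasurable f volume)
    (ξ : ℝ) :
    HasDerivAt (D1 f) (D2 f ξ) ξ := by
  have hφm : AEStronglyMeasurable (fun x : ℝ => (f x : ℂ) * (-(Complex.I * x))) volume :=
    (Complex.continuous_ofReal.comp_aestronglyMeasurable hf_meas).mul
      (by fun_prop : Continuous (fun x : ℝ => -(Complex.I * (x:ℂ)))).aestronglyMeasurable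
  have hφ : Integrable (fun x : ℝ => (f x : ℂ) * (-(Complex.I * x))) := by
    apply Integrable.mono' hf_mom1.norm hφm
    filter_upwards with x
    rw [norm_mul, norm_neg, norm_mul, Complex.norm_I, one_mul, Complex.norm_real,
      Complex.norm_real, Real.norm_eq_abs, Real.norm_eq_abs, Real.norm_eq_abs, abs_mul]
    exact le_of_eq (mul_comm _ _)
  have hφ' : Integrable (fun x : ℝ => (x : ℂ) * ((f x : ℂ) * (-(Complex.I * x)))) := by
    apply Integrable.mono' hf_mom2.norm
    · exact (Complex.continuous_ofReal.aestronglyMeasurable).mul hφm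
    · filter_upwards with x
      rw [norm_mul, norm_mul, norm_neg, norm_mul, Complex.norm_I, one_mul]
      simp only [Complex.norm_real, Real.norm_eq_abs]
      rw [abs_mul, abs_pow]
      nlinarith [abs_nonneg x, abs_nonneg (f x)]
  exact hasDerivAt_ftaux _ hφ hφ' ξ

lemma ft_zero (f : ℝ → ℝ) : ft f 0 = ((∫ x : ℝ, f x : ℝ) : ℂ) := by
  unfold ft
  simp only [Complex.ofReal_zero, mul_zero, zero_mul, neg_zero, Complex.exp_zero, mul_one]
  exact integral_ofReal

lemma D1_zero (f : ℝ → ℝ) : D1 f 0 = -Complex.I * ((∫ x : ℝ, x * f x : ℝ) : ℂ) := by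
  have h1 : D1 f 0 = ∫ x : ℝ, -Complex.I * ((x * f x : ℝ) : ℂ) := by
    unfold D1
    apply integral_congr_ae
    filter_upwards with x
    have hx : -(Complex.I * ((0:ℝ):ℂ) * x) = 0 := by push_cast; ring
    rw [hx, Complex.exp_zero, mul_one]
    push_cast
    ring
  rw [h1, integral_const_mul]
  congr 1
  exact integral_ofReal

lemma D2_zero (f : ℝ → ℝ) : D2 f 0 = -((∫ x : ℝ, x ^ 2 * f x : ℝ) : ℂ) := by
  have h1 : D2 f 0 = ∫ x : ℝ, (-1 : ℂ) * ((x ^ 2 * f x : ℝ) : ℂ) := by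
    unfold D2
    apply integral_congr_ae
    filter_upwards with x
    have hx : -(Complex.I * ((0:ℝ):ℂ) * x) = 0 := by push_cast; ring
    rw [hx, Complex.exp_zero, mul_one]
    push_cast
    linear_combination ((f x : ℂ) * (x:ℂ) ^ 2) * Complex.I_sq
  rw [h1, integral_const_mul]
  have h2 : (∫ x : ℝ, ((x ^ 2 * f x : ℝ) : ℂ)) = ((∫ x : ℝ, x ^ 2 * f x : ℝ) : ℂ) :=
    integral_ofReal
  rw [h2]
  ring

theorem part2 (lam : ℝ) (hlam₀ : 0 < lam) (hlam₁ : lam < 1)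
    (g : ℝ → ℝ)
    (hg_int : Integrable g)
    (hg_mass : ∫ x : ℝ, g x = 1)
    (hg_mom1 : Integrable (fun x => x * g x))
    (hg_mom2 : Integrable (fun x => x ^ 2 * g x))
    (hg_mean : (∫ x : ℝ, x * g x) = 0)
    (f : ℝ → ℝ)
    (hf_int : Integrable f)
    (hf_mass : ∫ x : ℝ, f x = 1)
    (hf_mom1 : Integrable (fun x => x * f x))
    (hf_mom2 : Integrable (fun x => x ^ 2 * f x))
    (hfe : ∀ ξ : ℝ, ft f ξ = ft f (lam * ξ) * ft f ((1 - lam) * ξ) * ft g ξ) :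
    (∫ x : ℝ, x ^ 2 * f x) - (∫ x : ℝ, x * f x) ^ 2 =
      ((∫ x : ℝ, x ^ 2 * g x) - (∫ x : ℝ, x * g x) ^ 2) / (2 * lam * (1 - lam)) := by
  have hF' : ∀ ξ : ℝ, HasDerivAt (ft f) (D1 f ξ) ξ := ft_hasDerivAt f hf_int hf_mom1
  have hF'' : ∀ ξ : ℝ, HasDerivAt (D1 f) (D2 f ξ) ξ :=
    D1_hasDerivAt f hf_mom1 hf_mom2 hf_int.1
  have hG' : ∀ ξ : ℝ, HasDerivAt (ft g) (D1 g ξ) ξ := ft_hasDerivAt g hg_int hg_mom1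
  have hG'' : ∀ ξ : ℝ, HasDerivAt (D1 g) (D2 g ξ) ξ :=
    D1_hasDerivAt g hg_mom1 hg_mom2 hg_int.1
  have hA : ∀ ξ₀ : ℝ, HasDerivAt (fun ξ : ℝ => ft f (lam * ξ)) (lam * D1 f (lam * ξ₀)) ξ₀ := by
    intro ξ₀
    have hid : HasDerivAt (fun ξ : ℝ => lam * ξ) lam ξ₀ := by
      simpa using (hasDerivAt_id ξ₀).const_mul lam
    have h := (hF' (lam * ξ₀)).scomp ξ₀ hid
    simpa [Function.comp_def, Complex.real_smul] using h
  have hB : ∀ ξ₀ : ℝ, HasDerivAt (fun ξ : ℝ => ft f ((1 - lam) * ξ))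
      ((1 - lam) * D1 f ((1 - lam) * ξ₀)) ξ₀ := by
    intro ξ₀
    have hid : HasDerivAt (fun ξ : ℝ => (1 - lam) * ξ) (1 - lam) ξ₀ := by
      simpa using (hasDerivAt_id ξ₀).const_mul (1 - lam)
    have h := (hF' ((1 - lam) * ξ₀)).scomp ξ₀ hid
    simpa [Function.comp_def, Complex.real_smul] using h
  have hE : ∀ ξ₀ : ℝ, HasDerivAt (ft f)
      ((lam * D1 f (lam * ξ₀) * ft f ((1 - lam) * ξ₀)
          + ft f (lam * ξ₀) * ((1 - lam) * D1 f ((1 - lam) * ξ₀))) * ft g ξ₀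
        + ft f (lam * ξ₀) * ft f ((1 - lam) * ξ₀) * D1 g ξ₀) ξ₀ := by
    intro ξ₀
    have h : HasDerivAt (fun ξ => ft f (lam * ξ) * ft f ((1 - lam) * ξ) * ft g ξ) _ ξ₀ :=
      ((hA ξ₀).mul (hB ξ₀)).mul (hG' ξ₀)
    have hfun : (fun ξ => ft f (lam * ξ) * ft f ((1 - lam) * ξ) * ft g ξ) = ft f :=
      funext fun ξ => (hfe ξ).symm
    rwa [hfun] at h
  have hstep1 : D1 f = fun ξ₀ : ℝ =>
      (lam * D1 f (lam * ξ₀) * ft f ((1 - lam) * ξ₀)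
          + ft f (lam * ξ₀) * ((1 - lam) * D1 f ((1 - lam) * ξ₀))) * ft g ξ₀
        + ft f (lam * ξ₀) * ft f ((1 - lam) * ξ₀) * D1 g ξ₀ :=
    funext fun ξ₀ => (hF' ξ₀).unique (hE ξ₀)
  -- derivatives of the pieces at 0
  have hDfA : HasDerivAt (fun ξ : ℝ => D1 f (lam * ξ)) (lam * D2 f 0) 0 := by
    have hid : HasDerivAt (fun ξ : ℝ => lam * ξ) lam (0:ℝ) := by
      simpa using (hasDerivAt_id (0:ℝ)).const_mul lam
    have h := (hF'' (lam * 0)).scomp 0 hid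
    simpa [Function.comp_def, Complex.real_smul] using h
  have hDfB : HasDerivAt (fun ξ : ℝ => D1 f ((1 - lam) * ξ)) ((1 - lam) * D2 f 0) 0 := by
    have hid : HasDerivAt (fun ξ : ℝ => (1 - lam) * ξ) (1 - lam) (0:ℝ) := by
      simpa using (hasDerivAt_id (0:ℝ)).const_mul (1 - lam)
    have h := (hF'' ((1 - lam) * 0)).scomp 0 hid
    simpa [Function.comp_def, Complex.real_smul] using h
  have h1 := ((hDfA.const_mul ((lam : ℝ) : ℂ)).mul (hB 0)).add ((hA 0).mul (hDfB.const_mul ((1 - lam : ℝ) : ℂ)))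
  have h2 := h1.mul (hG' 0)
  have h3 := ((hA 0).mul (hB 0)).mul (hG'' 0)
  have hRHS := h2.add h3
  simp only [Pi.mul_def, Pi.add_def] at hRHS
  push_cast at hstep1 hRHS
  rw [← hstep1] at hRHS
  have hkey := (hF'' 0).unique hRHS
  -- substitute values at 0
  have hF0 : ft f 0 = 1 := by rw [ft_zero, hf_mass]; norm_num
  have hG0 : ft g 0 = 1 := by rw [ft_zero, hg_mass]; norm_num
  have hDg0 : D1 g 0 = 0 := by rw [D1_zero, hg_mean]; simp
  simp only [mul_zero, hF0, hG0, hDg0, D1_zero f, D2_zero f, D2_zero g, hg_mean] at hkey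
  set a : ℝ := ∫ x : ℝ, x * f x with ha
  set b : ℝ := ∫ x : ℝ, x ^ 2 * f x with hb
  set c : ℝ := ∫ x : ℝ, x ^ 2 * g x with hc
  have hden : (2 * lam * (1 - lam) : ℝ) ≠ 0 := by nlinarith
  rw [hg_mean]
  rw [eq_div_iff hden]
  have hcomplex : ((b - a ^ 2) * (2 * lam * (1 - lam)) : ℂ) = ((c : ℂ) - 0 ^ 2) := by
    ring_nf at hkey ⊢
    rw [Complex.I_sq] at hkey
    ring_nf at hkey
    linear_combination (-1 : ℂ) * hkey
  have := hcomplex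
  push_cast at this
  exact_mod_cast this

end St4

/-- For `0 < λ < 1` and a zero-mean probability density `g` with finite second
moment, `f̂` satisfies `f̂(ξ) = f̂(λξ) f̂((1-λ)ξ) ĝ(ξ)`, and any probability density `f` with
Fourier transform `f̂` has variance `Var[f] = Var[g] / (2λ(1-λ))`. -/

theorem stmt_4 (lam : ℝ) (hlam₀ : 0 < lam) (hlam₁ : lam < 1)
    (g : ℝ → ℝ)
    (hg_nonneg : ∀ x, 0 ≤ g x)
    (hg_int : Integrable g)
    (hg_mass : ∫ x : ℝ, g x = 1)
    (hg_mom1 : Integrable (fun x => x * g x))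
    (hg_mom2 : Integrable (fun x => x ^ 2 * g x))
    (hg_mean : (∫ x : ℝ, x * g x) = 0) :
    (∀ ξ : ℝ, fhat g lam ξ = fhat g lam (lam * ξ) * fhat g lam ((1 - lam) * ξ) * ft g ξ) ∧
    (∀ f : ℝ → ℝ, (∀ x, 0 ≤ f x) → Integrable f → (∫ x : ℝ, f x = 1) →
      Integrable (fun x => x * f x) → Integrable (fun x => x ^ 2 * f x) →
      (∀ ξ : ℝ, ft f ξ = fhat g lam ξ) →
      (∫ x : ℝ, x ^ 2 * f x) - (∫ x : ℝ, x * f x) ^ 2 =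
        ((∫ x : ℝ, x ^ 2 * g x) - (∫ x : ℝ, x * g x) ^ 2) / (2 * lam * (1 - lam))) := by
  have hM : (0:ℝ) ≤ 3 * ∫ x : ℝ, x ^ 2 * g x := by
    have h0 : (0:ℝ) ≤ ∫ x : ℝ, x ^ 2 * g x :=
      integral_nonneg (fun x => mul_nonneg (sq_nonneg x) (hg_nonneg x))
    linarith
  have hft : ∀ η : ℝ, ‖ft g η - 1‖ ≤ (3 * ∫ x : ℝ, x ^ 2 * g x) * η ^ 2 :=
    St4.ft_sub_one_bound g hg_nonneg hg_int hg_mass hg_mom1 hg_mom2 hg_mean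
  constructor
  · exact fun ξ => St4.part1 hM hft hlam₀ hlam₁ ξ
  · intro f hf_nonneg hf_int hf_mass hf_mom1 hf_mom2 hf_ft
    apply St4.part2 lam hlam₀ hlam₁ g hg_int hg_mass hg_mom1 hg_mom2 hg_mean f hf_int hf_mass
      hf_mom1 hf_mom2
    intro ξ
    rw [hf_ft ξ, hf_ft (lam * ξ), hf_ft ((1 - lam) * ξ)]
    exact St4.part1 hM hft hlam₀ hlam₁ ξ
end

section
/- In the hard-sphere case, 2Γ(1/2) − Γ(0) − Γ(1) = 2/(3π), and for every integer k ≥ 2 one has 2Γ(k/2) − Γ(0) − Γ(k) = −4(2k⁴ − 4 sin(kπ/2)k³ + k² + sin(kπ/2)k)/((k²−1)(4k²−1)π); moreover for k ≥ 2 the numerator satisfies 2k⁴ − 4 sin(kπ/2)k³ + k² + sin(kπ/2)k ≥ 2k⁴ − 4k³ + k² − k ≥ k² − k > 0, so 2Γ(k/2) − Γ(0) − Γ(k) < 0. -/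
open Real

/-- Hard-sphere kernel transform: `Γ(u) = (2 - 4u sin(πu))/(π - 4πu²)` for `u ≠ ±1/2`,
`Γ(±1/2) = 1/π`. -/
noncomputable def GamH (u : ℝ) : ℝ :=
  if u = 1 / 2 ∨ u = -(1 / 2) then 1 / π
  else (2 - 4 * u * Real.sin (π * u)) / (π - 4 * π * u ^ 2)

/-- In the hard-sphere case, `2Γ(1/2) - Γ(0) - Γ(1) = 2/(3π)`, and for every
integer `k ≥ 2`,
`2Γ(k/2) - Γ(0) - Γ(k) = -4(2k⁴ - 4 sin(kπ/2)k³ + k² + sin(kπ/2)k)/((k²-1)(4k²-1)π)`,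
the numerator satisfies
`2k⁴ - 4 sin(kπ/2)k³ + k² + sin(kπ/2)k ≥ 2k⁴ - 4k³ + k² - k ≥ k² - k > 0`,
and hence `2Γ(k/2) - Γ(0) - Γ(k) < 0`. -/
theorem stmt_10 :
    2 * GamH (1 / 2) - GamH 0 - GamH 1 = 2 / (3 * π) ∧
    ∀ k : ℤ, 2 ≤ k →
      (2 * GamH ((k : ℝ) / 2) - GamH 0 - GamH (k : ℝ) =
        -(4 * (2 * (k : ℝ) ^ 4 - 4 * Real.sin ((k : ℝ) * π / 2) * (k : ℝ) ^ 3 + (k : ℝ) ^ 2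
            + Real.sin ((k : ℝ) * π / 2) * (k : ℝ)) /
          (((k : ℝ) ^ 2 - 1) * (4 * (k : ℝ) ^ 2 - 1) * π))) ∧
      (2 * (k : ℝ) ^ 4 - 4 * Real.sin ((k : ℝ) * π / 2) * (k : ℝ) ^ 3 + (k : ℝ) ^ 2
          + Real.sin ((k : ℝ) * π / 2) * (k : ℝ) ≥
        2 * (k : ℝ) ^ 4 - 4 * (k : ℝ) ^ 3 + (k : ℝ) ^ 2 - (k : ℝ)) ∧
      (2 * (k : ℝ) ^ 4 - 4 * (k : ℝ) ^ 3 + (k : ℝ) ^ 2 - (k : ℝ) ≥ (k : ℝ) ^ 2 - (k : ℝ)) ∧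
      ((0 : ℝ) < (k : ℝ) ^ 2 - (k : ℝ)) ∧
      (2 * GamH ((k : ℝ) / 2) - GamH 0 - GamH (k : ℝ) < 0) := by
  have hπ := Real.pi_pos
  have hπ0 : π ≠ 0 := ne_of_gt hπ
  constructor
  · have h1 : GamH (1/2) = 1/π := by unfold GamH; simp
    have h0 : GamH 0 = 2/π := by
      unfold GamH; rw [if_neg (by norm_num)]; norm_num
    have h2 : GamH 1 = -(2/(3*π)) := by
      unfold GamH; rw [if_neg (by norm_num), show π * 1 = π from mul_one π, Real.sin_pi]
      rw [div_eq_iff (by nlinarith : π - 4*π*(1:ℝ)^2 ≠ 0)]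
      field_simp
      ring
    rw [h1, h0, h2]; field_simp; ring
  · intro k hk
    have hx : (2:ℝ) ≤ (k:ℝ) := by exact_mod_cast hk
    have hs1 : Real.sin ((k:ℝ) * π / 2) ≤ 1 := Real.sin_le_one _
    have hs2 : -1 ≤ Real.sin ((k:ℝ) * π / 2) := Real.neg_one_le_sin _
    have hd1 : (1:ℝ) < (k:ℝ)^2 := by nlinarith
    have hd2 : (1:ℝ) < 4*(k:ℝ)^2 := by nlinarith
    have hk3 : (0:ℝ) ≤ (k:ℝ)^3 := by nlinarith
    have heq : 2 * GamH ((k : ℝ) / 2) - GamH 0 - GamH (k : ℝ) =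
        -(4 * (2 * (k : ℝ) ^ 4 - 4 * Real.sin ((k : ℝ) * π / 2) * (k : ℝ) ^ 3 + (k : ℝ) ^ 2
            + Real.sin ((k : ℝ) * π / 2) * (k : ℝ)) /
          (((k : ℝ) ^ 2 - 1) * (4 * (k : ℝ) ^ 2 - 1) * π)) := by
      have e0 : GamH 0 = 2/π := by
        unfold GamH; rw [if_neg (by norm_num)]; norm_num
      have ek : GamH (k:ℝ) = 2 / (π * (1 - 4*(k:ℝ)^2)) := by
        unfold GamH
        rw [if_neg (by rintro (h|h) <;> linarith)]
        have hs : Real.sin (π * (k:ℝ)) = 0 := by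
          rw [mul_comm]; exact Real.sin_int_mul_pi k
        rw [hs]; ring_nf
      have eh : GamH ((k:ℝ)/2) =
          (2 - 2*(k:ℝ) * Real.sin ((k:ℝ)*π/2)) / (π * (1 - (k:ℝ)^2)) := by
        unfold GamH
        rw [if_neg (by rintro (h|h) <;> linarith)]
        have harg : π * ((k:ℝ)/2) = (k:ℝ)*π/2 := by ring
        rw [harg]; ring_nf
      rw [e0, ek, eh]
      have n1 : π * (1 - (k:ℝ)^2) ≠ 0 := by
        apply mul_ne_zero hπ0; nlinarith
      have n2 : π * (1 - 4*(k:ℝ)^2) ≠ 0 := by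
        apply mul_ne_zero hπ0; nlinarith
      have n3 : ((k:ℝ)^2 - 1) ≠ 0 := by nlinarith
      have n4 : (4*(k:ℝ)^2 - 1) ≠ 0 := by nlinarith
      have n5 : (1 - (k:ℝ)^2) ≠ 0 := by nlinarith
      have n6 : (1 - 4*(k:ℝ)^2) ≠ 0 := by nlinarith
      have n7 : 1 - (k:ℝ)^2*4 ≠ 0 := by intro h; apply n6; linarith
      have n8 : (k:ℝ)^2*4 - 1 ≠ 0 := by intro h; apply n4; linarith
      field_simp
      ring
    have ha : 2 * (k : ℝ) ^ 4 - 4 * Real.sin ((k : ℝ) * π / 2) * (k : ℝ) ^ 3 + (k : ℝ) ^ 2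
          + Real.sin ((k : ℝ) * π / 2) * (k : ℝ) ≥
        2 * (k : ℝ) ^ 4 - 4 * (k : ℝ) ^ 3 + (k : ℝ) ^ 2 - (k : ℝ) := by
      nlinarith [mul_nonneg (by linarith : (0:ℝ) ≤ 1 - Real.sin ((k:ℝ)*π/2)) hk3,
        mul_nonneg (by linarith : (0:ℝ) ≤ Real.sin ((k:ℝ)*π/2) + 1) (by linarith : (0:ℝ) ≤ (k:ℝ))]
    have hb : 2 * (k : ℝ) ^ 4 - 4 * (k : ℝ) ^ 3 + (k : ℝ) ^ 2 - (k : ℝ) ≥ (k : ℝ) ^ 2 - (k : ℝ) := by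
      nlinarith [mul_nonneg (by linarith : (0:ℝ) ≤ (k:ℝ) - 2) hk3]
    have hc : (0 : ℝ) < (k : ℝ) ^ 2 - (k : ℝ) := by nlinarith
    refine ⟨heq, ha, hb, hc, ?_⟩
    rw [heq]
    have hnum : (0:ℝ) < 4 * (2 * (k : ℝ) ^ 4 - 4 * Real.sin ((k : ℝ) * π / 2) * (k : ℝ) ^ 3
        + (k : ℝ) ^ 2 + Real.sin ((k : ℝ) * π / 2) * (k : ℝ)) := by linarith
    have hden : (0:ℝ) < ((k : ℝ) ^ 2 - 1) * (4 * (k : ℝ) ^ 2 - 1) * π := by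
      apply mul_pos (mul_pos (by nlinarith) (by nlinarith)) hπ
    have := div_pos hnum hden
    linarith
end

section
/- Under the Hypothesis on the noise family g_{γ₁} and for the Maxwellian Fourier dynamics, the uniform distribution, with Fourier coefficients a₀ = 1 and a_k = 0 for k ≥ 1, is a stationary solution; it is linearly stable for γ₁ < π/4 and linearly unstable for γ₁ > π/4. -/
open Real

/-- Maxwellian kernel transform: `Γ(u) = sin(πu)/(πu)` for `u ≠ 0`, `Γ(0) = 1`. -/
noncomputable def Gam (u : ℝ) : ℝ :=
  if u = 0 then 1 else Real.sin (π * u) / (π * u)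

lemma Gam_half : Gam (1 / 2) = 2 / π := by
  have hπ := Real.pi_pos
  simp only [Gam, if_neg (by norm_num : (1:ℝ)/2 ≠ 0)]
  rw [show π * (1/2) = π/2 by ring, Real.sin_pi_div_two]
  field_simp

lemma Gam_abs_le (k : ℕ) (hk : 1 ≤ k) : |Gam ((k : ℝ) / 2)| ≤ 2 / (π * k) := by
  have hπ := Real.pi_pos
  have hk' : (0 : ℝ) < k := by exact_mod_cast hk
  have hu : (k : ℝ) / 2 ≠ 0 := by positivity
  have hden : (0 : ℝ) < π * ((k : ℝ) / 2) := by positivity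
  simp only [Gam, if_neg hu]
  rw [abs_div, abs_of_pos hden]
  rw [div_le_div_iff₀ hden (by positivity)]
  have h1 : |Real.sin (π * ((k : ℝ) / 2))| ≤ 1 := Real.abs_sin_le_one _
  calc |Real.sin (π * ((k : ℝ)/2))| * (π * k) ≤ 1 * (π * k) := by
        exact mul_le_mul_of_nonneg_right h1 (by positivity)
    _ = 2 * (π * ((k : ℝ)/2)) := by ring

/-- Under the Hypothesis on the noise family `g_{γ₁}` (finitely many
nonzero Fourier coefficients `γ_k(γ₁)`, `C²` in `γ₁`, with `γ₂ > 0`), the uniform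
distribution `a₀ = 1`, `a_k = 0 (k ≥ 1)` is stationary for the Maxwellian Fourier dynamics
`d/dt a_k = (2γ_kΓ(k/2) - 1)a_k + γ_kΣ_{n=1}^{k-1}Γ(n-k/2)a_n a_{k-n}
  + 2γ_kΣ_{n=k+1}^{∞}Γ(n-k/2)a_n a_{n-k}`;
it is linearly stable for `γ₁ < π/4` (all linearized eigenvalues `2γ_kΓ(k/2) - 1 < 0`) and
linearly unstable for `γ₁ > π/4` (some eigenvalue `> 0`). -/
theorem stmt_12
    (N : ℕ) (hN : 2 ≤ N)
    (γ : ℕ → ℝ → ℝ)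
    (hγ0 : ∀ s, γ 0 s = 1)
    (hγ1 : ∀ s, γ 1 s = s)
    (hγhigh : ∀ k, N < k → ∀ s, γ k s = 0)
    (hγC2 : ∀ k, k ≤ N → ContDiffOn ℝ 2 (γ k) (Set.Icc 0 1))
    (hγrange : ∀ k, 2 ≤ k → k ≤ N → ∀ s ∈ Set.Icc (0 : ℝ) 1, γ k s ∈ Set.Icc (-1 : ℝ) 1)
    (hγ2pos : ∀ s ∈ Set.Icc (0 : ℝ) 1, 0 < γ 2 s)
    (γ₁ : ℝ) (hγ₁ : γ₁ ∈ Set.Icc (0 : ℝ) 1)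
    (unif : ℕ → ℝ) (hunif : unif = fun k => if k = 0 then 1 else 0) :
    (∀ k : ℕ, 1 ≤ k →
      (2 * γ k γ₁ * Gam ((k : ℝ) / 2) - 1) * unif k
        + γ k γ₁ * (∑ n ∈ Finset.Ico 1 k, Gam ((n : ℝ) - (k : ℝ) / 2) * unif n * unif (k - n))
        + 2 * γ k γ₁ * (∑' m : ℕ, Gam (((k : ℝ) + 1 + (m : ℝ)) - (k : ℝ) / 2)
            * unif (k + 1 + m) * unif (m + 1)) = 0) ∧
    (γ₁ < π / 4 → ∀ k : ℕ, 1 ≤ k → 2 * γ k γ₁ * Gam ((k : ℝ) / 2) - 1 < 0) ∧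
    (π / 4 < γ₁ → ∃ k : ℕ, 1 ≤ k ∧ 0 < 2 * γ k γ₁ * Gam ((k : ℝ) / 2) - 1) := by
  have hπ := Real.pi_pos
  subst hunif
  refine ⟨?_, ?_, ?_⟩
  · intro k hk
    beta_reduce
    have h1 : (if k = 0 then (1:ℝ) else 0) = 0 := if_neg (by omega)
    rw [h1]
    have h2 : ∀ n ∈ Finset.Ico 1 k,
        Gam ((n : ℝ) - (k : ℝ) / 2) * (if n = 0 then (1:ℝ) else 0)
          * (if k - n = 0 then (1:ℝ) else 0) = 0 := by
      intro n hn
      rw [Finset.mem_Ico] at hn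
      rw [if_neg (by omega)]; ring
    rw [Finset.sum_congr rfl h2, Finset.sum_const_zero]
    have h3 : (∑' m : ℕ, Gam (((k : ℝ) + 1 + (m : ℝ)) - (k : ℝ) / 2)
        * (if k + 1 + m = 0 then (1:ℝ) else 0) * (if m + 1 = 0 then (1:ℝ) else 0)) = 0 := by
      convert tsum_zero with m
      rw [if_neg (by omega)]; ring
    rw [h3]; ring
  · intro hs k hk
    rcases eq_or_lt_of_le hk with h1 | h2
    · -- k = 1
      have hk1 : k = 1 := h1.symm
      subst hk1
      rw [hγ1]
      have : ((1 : ℕ) : ℝ) / 2 = 1 / 2 := by norm_num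
      rw [this, Gam_half]
      have h : 2 * γ₁ * (2 / π) < 1 := by
        rw [show 2 * γ₁ * (2 / π) = 4 * γ₁ / π by ring, div_lt_one hπ]
        linarith
      linarith
    · -- k ≥ 2
      have hk2 : 2 ≤ k := h2
      have hγb : |γ k γ₁| ≤ 1 := by
        rcases le_or_gt k N with hkN | hkN
        · have := hγrange k hk2 hkN γ₁ hγ₁
          rw [abs_le]; exact ⟨this.1, this.2⟩
        · rw [hγhigh k hkN]; norm_num
      have hG := Gam_abs_le k (by omega)
      have hk' : (2 : ℝ) ≤ (k : ℝ) := by exact_mod_cast hk2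
      have key : 2 * γ k γ₁ * Gam ((k : ℝ) / 2) < 1 := by
        calc 2 * γ k γ₁ * Gam ((k : ℝ) / 2)
            ≤ |2 * γ k γ₁ * Gam ((k : ℝ) / 2)| := le_abs_self _
          _ = 2 * |γ k γ₁| * |Gam ((k : ℝ) / 2)| := by
              rw [abs_mul, abs_mul]; norm_num
          _ ≤ 2 * 1 * (2 / (π * k)) := by
              apply mul_le_mul _ hG (abs_nonneg _) (by norm_num)
              nlinarith
          _ = 4 / (π * k) := by ring
          _ ≤ 4 / (π * 2) := by
              apply div_le_div_of_nonneg_left (by norm_num) (by positivity)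
              nlinarith
          _ = 2 / π := by ring
          _ < 1 := by
              rw [div_lt_one hπ]; linarith [Real.pi_gt_three]
      linarith
  · intro hs
    refine ⟨1, le_refl 1, ?_⟩
    rw [hγ1]
    have : ((1 : ℕ) : ℝ) / 2 = 1 / 2 := by norm_num
    rw [this, Gam_half]
    have h : 1 < 2 * γ₁ * (2 / π) := by
      rw [show 2 * γ₁ * (2 / π) = 4 * γ₁ / π by ring, lt_div_iff₀ hπ, one_mul]
      linarith
    linarith
end

section
/- Let (a_k)_{k∈ℤ} with a_{−k} = a_k be an even stationary solution of the Maxwellian Fourier system. Then for every even integer k ≠ 0, a_k = γ_k (a_{k/2})², and consequently for every m ≥ 1, a_{2^m} = (∏_{j=0}^{m−1} (γ_{2^{m−j}})^{2^j}) · a₁^{2^m}. -/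
open Real

lemma Gam_int_ne (n : ℤ) (hn : n ≠ 0) : Gam (n : ℝ) = 0 := by
  have h0 : (n : ℝ) ≠ 0 := Int.cast_ne_zero.mpr hn
  simp only [Gam, if_neg h0]
  rw [mul_comm, Real.sin_int_mul_pi, zero_div]

lemma Gam_zero : Gam 0 = 1 := by simp [Gam]

/-- For an even stationary solution `(a_k)_{k∈ℤ}`, `a_{-k} = a_k`, of the
Maxwellian Fourier system, every even mode satisfies `a_k = γ_k (a_{k/2})²` (`k ≠ 0` even),
and hence `a_{2^m} = (∏_{j=0}^{m-1} γ_{2^{m-j}}^{2^j}) a₁^{2^m}` for all `m ≥ 1`. -/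
theorem stmt_16
    (γ : ℤ → ℝ) (hγeven : ∀ k, γ (-k) = γ k)
    (a : ℤ → ℝ) (haeven : ∀ k, a (-k) = a k)
    (hstat : ∀ k : ℤ, 1 ≤ k →
      a k = 2 * γ k * Gam ((k : ℝ) / 2) * a k
        + γ k * (∑ n ∈ Finset.Ico (1 : ℤ) k,
            Gam ((n : ℝ) - (k : ℝ) / 2) * a n * a (k - n))
        + 2 * γ k * (∑' m : ℕ, Gam (((k : ℝ) + 1 + (m : ℝ)) - (k : ℝ) / 2)
            * a (k + 1 + (m : ℤ)) * a ((m : ℤ) + 1))) :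
    (∀ k : ℤ, k ≠ 0 → Even k → a k = γ k * (a (k / 2)) ^ 2) ∧
    (∀ m : ℕ, 1 ≤ m →
      a (2 ^ m) = (∏ j ∈ Finset.range m, (γ ((2 : ℤ) ^ (m - j))) ^ (2 ^ j)) * (a 1) ^ (2 ^ m)) := by
  -- First, the key claim for positive even k
  have key : ∀ c : ℤ, 1 ≤ c → a (2 * c) = γ (2 * c) * (a c) ^ 2 := by
    intro c hc
    have hk : (1 : ℤ) ≤ 2 * c := by linarith
    have heq := hstat (2 * c) hk
    have h2c : ((2 * c : ℤ) : ℝ) / 2 = (c : ℝ) := by push_cast; ring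
    -- First term: Gam(c) = 0
    have hG1 : Gam (((2 * c : ℤ) : ℝ) / 2) = 0 := by
      rw [h2c]; exact Gam_int_ne c (by omega)
    -- Finite sum: only n = c survives
    have hsum : (∑ n ∈ Finset.Ico (1 : ℤ) (2 * c),
        Gam ((n : ℝ) - ((2 * c : ℤ) : ℝ) / 2) * a n * a (2 * c - n)) = a c * a c := by
      rw [Finset.sum_eq_single c]
      · have : ((c : ℝ) - ((2 * c : ℤ) : ℝ) / 2) = ((0 : ℤ) : ℝ) := by push_cast; ring
        rw [this, Int.cast_zero, Gam_zero, one_mul, show 2 * c - c = c by ring]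
      · intro n _ hn
        have : ((n : ℝ) - ((2 * c : ℤ) : ℝ) / 2) = ((n - c : ℤ) : ℝ) := by push_cast; ring
        rw [this, Gam_int_ne (n - c) (by omega), zero_mul, zero_mul]
      · intro hcm
        exfalso
        apply hcm
        simp only [Finset.mem_Ico]
        omega
    -- Infinite sum: all terms vanish
    have htsum : (∑' m : ℕ, Gam ((((2 * c : ℤ) : ℝ) + 1 + (m : ℝ)) - ((2 * c : ℤ) : ℝ) / 2)
        * a (2 * c + 1 + (m : ℤ)) * a ((m : ℤ) + 1)) = 0 := by
      have : ∀ m : ℕ, Gam ((((2 * c : ℤ) : ℝ) + 1 + (m : ℝ)) - ((2 * c : ℤ) : ℝ) / 2)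
          * a (2 * c + 1 + (m : ℤ)) * a ((m : ℤ) + 1) = 0 := by
        intro m
        have : ((((2 * c : ℤ) : ℝ) + 1 + (m : ℝ)) - ((2 * c : ℤ) : ℝ) / 2)
            = ((c + 1 + (m : ℤ) : ℤ) : ℝ) := by push_cast; ring
        rw [this, Gam_int_ne (c + 1 + (m : ℤ)) (by omega), zero_mul, zero_mul]
      rw [tsum_congr this, tsum_zero]
    rw [hG1, hsum, htsum] at heq
    rw [heq]; ring
  have part1 : ∀ k : ℤ, k ≠ 0 → Even k → a k = γ k * (a (k / 2)) ^ 2 := by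
    intro k hk hke
    obtain ⟨c, hc⟩ := hke
    have hk2 : k = 2 * c := by omega
    subst hk2
    have hdiv : (2 * c) / 2 = c := by omega
    rw [hdiv]
    rcases lt_or_ge c 0 with h | h
    · -- negative case: reduce to positive via evenness
      have h1 : a (2 * c) = a (2 * (-c)) := by
        rw [show (2 : ℤ) * (-c) = -(2 * c) by ring, haeven]
      have h2 : γ (2 * c) = γ (2 * (-c)) := by
        rw [show (2 : ℤ) * (-c) = -(2 * c) by ring, hγeven]
      have h3 : a c = a (-c) := (haeven c).symm
      rw [h1, h2, h3]
      exact key (-c) (by omega)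
    · exact key c (by omega)
  refine ⟨part1, ?_⟩
  intro m hm
  induction m with
  | zero => omega
  | succ n ih =>
    rcases Nat.eq_or_lt_of_le hm with h | h
    · -- n = 0, m = 1
      have hn0 : n = 0 := by omega
      subst hn0
      have := key 1 le_rfl
      norm_num at this ⊢
      exact this
    · have hn1 : 1 ≤ n := by omega
      have ihn := ih hn1
      have hkey : a (2 ^ (n + 1)) = γ (2 ^ (n + 1)) * (a (2 ^ n)) ^ 2 := by
        have := key (2 ^ n) (by exact one_le_pow₀ one_le_two)
        rw [show (2 : ℤ) * 2 ^ n = 2 ^ (n + 1) by ring] at this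
        exact this
      rw [hkey, ihn]
      rw [Finset.prod_range_succ']
      have hshift : ∀ j ∈ Finset.range n,
          (γ ((2 : ℤ) ^ (n + 1 - (j + 1)))) ^ (2 ^ (j + 1))
          = ((γ ((2 : ℤ) ^ (n - j))) ^ (2 ^ j)) ^ 2 := by
        intro j hj
        rw [show n + 1 - (j + 1) = n - j by omega, ← pow_mul]
        ring_nf
      rw [Finset.prod_congr rfl hshift]
      rw [show n + 1 - 0 = n + 1 by omega]
      rw [Finset.prod_pow]
      rw [show (2 : ℕ) ^ (n + 1) = 2 ^ n * 2 by ring, pow_mul]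
      ring
end
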